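/- arXiv:1709.10203 — 9 statements merged into one kernel-verified Lean document; each statement's English description precedes it below -/
import Mathlib

section
/- Let a : ℤ → ℂ satisfy a_k = 0 for all k ≤ −1, and suppose there exist constants C > 0, D ≥ 0 and ρ ∈ (0,1) with |a_0| ≤ D and |a_k| ≤ C·ρ^{k−1} for all k ≥ 1. Let θ₀ ∈ [−π,π] satisfy |a(e^{iθ₀})| = ‖a‖∞. Then for every θ ∈ [−π,π], ‖a‖∞² − |a(e^{iθ})|² ≤ ((D·C·(1−ρ²) + C²·ρ)/(1−ρ)⁴) · (θ − θ₀)². -/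
open scoped Real

/-- The `n × n` Toeplitz matrix of a sequence `a : ℤ → ℂ`, with `(j,k)` entry `a (j - k)`. -/
noncomputable def toeplitz (a : ℤ → ℂ) (n : ℕ) : Matrix (Fin n) (Fin n) ℂ :=
  fun j k => a ((j : ℤ) - (k : ℤ))

/-- The operator norm of the `n × n` Toeplitz matrix of `a`, as a linear map on
Euclidean space `ℂ^n`. -/
noncomputable def toeplitzNorm (a : ℤ → ℂ) (n : ℕ) : ℝ :=
  ‖Matrix.toEuclideanCLM (𝕜 := ℂ) (toeplitz a n)‖

/-- The symbol `a(e^{iθ}) = ∑_{k ∈ ℤ} a_k e^{ikθ}` of a sequence `a : ℤ → ℂ`. -/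
noncomputable def symbol (a : ℤ → ℂ) (θ : ℝ) : ℂ :=
  ∑' k : ℤ, a k * Complex.exp (Complex.I * k * θ)

/-- `‖a‖_∞ = sup_{θ ∈ [-π, π]} |a(e^{iθ})|`. -/
noncomputable def symbolSup (a : ℤ → ℂ) : ℝ :=
  sSup ((fun θ => ‖symbol a θ‖) '' Set.Icc (-π) π)

variable {ρ : ℝ}

lemma geo_summ0 (hρ0 : 0 ≤ ρ) (hρ1 : ρ < 1) : Summable (fun n : ℕ => ρ ^ n) :=
  summable_geometric_of_lt_one hρ0 hρ1

lemma geo_summ1 (hρ0 : 0 ≤ ρ) (hρ1 : ρ < 1) : Summable (fun n : ℕ => (n : ℝ) * ρ ^ n) := by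
  simpa using summable_pow_mul_geometric_of_norm_lt_one (R := ℝ) 1
    (by rwa [Real.norm_of_nonneg hρ0])

lemma geo_summ2 (hρ0 : 0 ≤ ρ) (hρ1 : ρ < 1) : Summable (fun n : ℕ => (n : ℝ) ^ 2 * ρ ^ n) := by
  simpa using summable_pow_mul_geometric_of_norm_lt_one (R := ℝ) 2
    (by rwa [Real.norm_of_nonneg hρ0])

lemma geo_sum2 (hρ0 : 0 ≤ ρ) (hρ1 : ρ < 1) :
    ∑' n : ℕ, (n : ℝ) ^ 2 * ρ ^ n = ρ * (1 + ρ) / (1 - ρ) ^ 3 := by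
  have h1ρ : (1 : ℝ) - ρ ≠ 0 := by intro h; nlinarith
  have hg0 : ∑' n : ℕ, ρ ^ n = (1 - ρ)⁻¹ := tsum_geometric_of_lt_one hρ0 hρ1
  have hg1 : ∑' n : ℕ, (n : ℝ) * ρ ^ n = ρ / (1 - ρ) ^ 2 :=
    tsum_coe_mul_geometric_of_norm_lt_one (by rwa [Real.norm_of_nonneg hρ0])
  have key : ∑' n : ℕ, (n : ℝ) ^ 2 * ρ ^ n
      = ρ * (∑' n : ℕ, (n : ℝ) ^ 2 * ρ ^ n) + ρ * 2 * (∑' n : ℕ, (n:ℝ) * ρ ^ n)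
        + ρ * (∑' n : ℕ, ρ ^ n) := by
    conv_lhs => rw [Summable.tsum_eq_zero_add (geo_summ2 hρ0 hρ1)]
    have h : ∀ n : ℕ, (((n : ℕ) + 1 : ℕ) : ℝ) ^ 2 * ρ ^ (n + 1)
        = ρ * ((n : ℝ) ^ 2 * ρ ^ n) + ρ * 2 * ((n:ℝ) * ρ ^ n) + ρ * ρ ^ n := by
      intro n; push_cast; ring
    simp_rw [h]
    rw [Summable.tsum_add (((geo_summ2 hρ0 hρ1).mul_left ρ).add (((geo_summ1 hρ0 hρ1).mul_left (ρ*2))))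
        ((geo_summ0 hρ0 hρ1).mul_left ρ),
      Summable.tsum_add ((geo_summ2 hρ0 hρ1).mul_left ρ) ((geo_summ1 hρ0 hρ1).mul_left (ρ*2)),
      tsum_mul_left, tsum_mul_left, tsum_mul_left]
    ring
  rw [hg0, hg1] at key
  have h3 : ((1:ℝ) - ρ)^3 ≠ 0 := pow_ne_zero _ h1ρ
  field_simp at key ⊢
  nlinarith [key]


noncomputable def bb (C D ρ : ℝ) : ℕ → ℝ
  | 0 => D
  | (n+1) => C * ρ ^ n

variable {C D ρ : ℝ}

lemma bb_nonneg (hC : 0 ≤ C) (hD : 0 ≤ D) (hρ0 : 0 ≤ ρ) : ∀ n, 0 ≤ bb C D ρ n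
  | 0 => hD
  | (n+1) => mul_nonneg hC (pow_nonneg hρ0 n)

lemma bb_le (hC : 0 ≤ C) (hD : 0 ≤ D) (hρ0 : 0 < ρ) :
    ∀ n : ℕ, ∀ k : ℕ, bb C D ρ n * (n:ℝ)^k ≤ (D + C/ρ) * ((n:ℝ)^k * ρ ^ n)
  | 0, k => by
      rcases Nat.eq_zero_or_pos k with hk | hk
      · subst hk; simp [bb]
        nlinarith [div_nonneg hC hρ0.le]
      · simp [bb, zero_pow hk.ne']
  | (n+1), k => by
      show C * ρ ^ n * _ ≤ _
      have : C * ρ ^ n = (C / ρ) * ρ ^ (n+1) := by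
        field_simp; ring
      rw [this]
      have h1 : (0:ℝ) ≤ ((n+1 : ℕ):ℝ)^k * ρ^(n+1) :=
        mul_nonneg (pow_nonneg (Nat.cast_nonneg _) _) (pow_nonneg hρ0.le _)
      nlinarith [mul_nonneg hD h1]

lemma geo_summk (k : ℕ) (hρ0 : 0 ≤ ρ) (hρ1 : ρ < 1) :
    Summable (fun n : ℕ => (n : ℝ) ^ k * ρ ^ n) := by
  simpa using summable_pow_mul_geometric_of_norm_lt_one (R := ℝ) k
    (by rwa [Real.norm_of_nonneg hρ0])

lemma bb_summ (k : ℕ) (hC : 0 ≤ C) (hD : 0 ≤ D) (hρ0 : 0 < ρ) (hρ1 : ρ < 1) :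
    Summable (fun n : ℕ => bb C D ρ n * (n:ℝ)^k) :=
  Summable.of_nonneg_of_le
    (fun n => mul_nonneg (bb_nonneg hC hD hρ0.le n) (pow_nonneg (Nat.cast_nonneg _) _))
    (fun n => bb_le hC hD hρ0 n k)
    ((geo_summk k hρ0.le hρ1).mul_left _)

lemma bb_shift (g : ℕ → ℝ) (hsum : Summable (fun n : ℕ => bb C D ρ n * g n)) :
    ∑' n : ℕ, bb C D ρ n * g n = D * g 0 + C * ∑' n : ℕ, ρ ^ n * g (n+1) := by
  rw [Summable.tsum_eq_zero_add hsum]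
  show bb C D ρ 0 * g 0 + ∑' n : ℕ, C * ρ ^ n * g (n+1) = _
  simp_rw [mul_assoc, tsum_mul_left]
  rfl

lemma geo_summ0' (hρ0 : 0 ≤ ρ) (hρ1 : ρ < 1) : Summable (fun n : ℕ => ρ ^ n) :=
  summable_geometric_of_lt_one hρ0 hρ1

lemma geo_summ1' (hρ0 : 0 ≤ ρ) (hρ1 : ρ < 1) : Summable (fun n : ℕ => (n : ℝ) * ρ ^ n) := by
  simpa using geo_summk 1 hρ0 hρ1

lemma bb_sum0 (hC : 0 ≤ C) (hD : 0 ≤ D) (hρ0 : 0 < ρ) (hρ1 : ρ < 1) :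
    ∑' n : ℕ, bb C D ρ n = D + C * (1-ρ)⁻¹ := by
  have := bb_shift (C := C) (D := D) (ρ := ρ) (fun _ => 1) (by simpa using bb_summ 0 hC hD hρ0 hρ1)
  simpa [tsum_geometric_of_lt_one hρ0.le hρ1] using this

lemma bb_sum1 (hC : 0 ≤ C) (hD : 0 ≤ D) (hρ0 : 0 < ρ) (hρ1 : ρ < 1) :
    ∑' n : ℕ, bb C D ρ n * (n:ℝ) = C / (1-ρ)^2 := by
  have h1ρ : (1 : ℝ) - ρ ≠ 0 := by intro h; nlinarith
  have := bb_shift (C := C) (D := D) (ρ := ρ) (fun n => (n:ℝ))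
    (by simpa using bb_summ 1 hC hD hρ0 hρ1)
  simp only [Nat.cast_zero, mul_zero, zero_add] at this
  rw [this]
  have expand : ∀ n : ℕ, ρ ^ n * ((n + 1 : ℕ):ℝ) = (n:ℝ) * ρ ^ n + ρ ^ n := by
    intro n; push_cast; ring
  simp_rw [expand]
  rw [Summable.tsum_add (geo_summ1' hρ0.le hρ1) (geo_summ0' hρ0.le hρ1),
    tsum_coe_mul_geometric_of_norm_lt_one (by rwa [Real.norm_of_nonneg hρ0.le]),
    tsum_geometric_of_lt_one hρ0.le hρ1]
  field_simp
  ring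

lemma bb_sum2 (hC : 0 ≤ C) (hD : 0 ≤ D) (hρ0 : 0 < ρ) (hρ1 : ρ < 1) :
    ∑' n : ℕ, bb C D ρ n * (n:ℝ)^2 = C * (1+ρ) / (1-ρ)^3 := by
  have h1ρ : (1 : ℝ) - ρ ≠ 0 := by intro h; nlinarith
  have := bb_shift (C := C) (D := D) (ρ := ρ) (fun n => ((n:ℝ))^2)
    (by simpa using bb_summ 2 hC hD hρ0 hρ1)
  simp only [Nat.cast_zero, mul_zero, zero_add, ne_eq, OfNat.ofNat_ne_zero,
    not_false_eq_true, zero_pow] at this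
  rw [this]
  have expand : ∀ n : ℕ, ρ ^ n * (((n + 1 : ℕ):ℝ))^2
      = (n:ℝ)^2 * ρ ^ n + 2 * ((n:ℝ) * ρ ^ n) + ρ ^ n := by
    intro n; push_cast; ring
  simp_rw [expand]
  rw [Summable.tsum_add (((geo_summk 2 hρ0.le hρ1)).add ((geo_summ1' hρ0.le hρ1).mul_left 2))
      (geo_summ0' hρ0.le hρ1),
    Summable.tsum_add (geo_summk 2 hρ0.le hρ1) ((geo_summ1' hρ0.le hρ1).mul_left 2), tsum_mul_left,
    geo_sum2 hρ0.le hρ1,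
    tsum_coe_mul_geometric_of_norm_lt_one (by rwa [Real.norm_of_nonneg hρ0.le]),
    tsum_geometric_of_lt_one hρ0.le hρ1]
  field_simp
  ring

section T
variable (C D ρ : ℝ)

noncomputable def Tterm : ℕ × ℕ → ℝ :=
  fun p => bb C D ρ p.1 * bb C D ρ p.2 * ((p.1 : ℝ) - (p.2 : ℝ))^2

variable {C D ρ}

lemma T_summable (hC : 0 ≤ C) (hD : 0 ≤ D) (hρ0 : 0 < ρ) (hρ1 : ρ < 1) :
    Summable (Tterm C D ρ) := by
  have h0 := bb_summ (C := C) (D := D) (ρ := ρ) 0 hC hD hρ0 hρ1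
  have h1 := bb_summ (C := C) (D := D) (ρ := ρ) 1 hC hD hρ0 hρ1
  have h2 := bb_summ (C := C) (D := D) (ρ := ρ) 2 hC hD hρ0 hρ1
  simp only [pow_zero, mul_one, pow_one] at h0 h1 h2
  have hb := bb_nonneg (C := C) (D := D) (ρ := ρ) hC hD hρ0.le
  have hnn2 : ∀ n : ℕ, (0:ℝ) ≤ bb C D ρ n * (n:ℝ)^2 :=
    fun n => mul_nonneg (hb n) (sq_nonneg _)
  have hnn1 : ∀ n : ℕ, (0:ℝ) ≤ bb C D ρ n * (n:ℝ) :=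
    fun n => mul_nonneg (hb n) (Nat.cast_nonneg _)
  have hs20 := (h2.mul_of_nonneg h0 hnn2 hb)
  have hs02 := (h0.mul_of_nonneg h2 hb hnn2)
  have hs11 := (h1.mul_of_nonneg h1 hnn1 hnn1)
  have hG : Summable (fun p : ℕ × ℕ => (bb C D ρ p.1 * (p.1:ℝ)^2) * bb C D ρ p.2
      + bb C D ρ p.1 * (bb C D ρ p.2 * (p.2:ℝ)^2)
      + 2 * ((bb C D ρ p.1 * (p.1:ℝ)) * (bb C D ρ p.2 * (p.2:ℝ)))) :=
    (hs20.add hs02).add (hs11.mul_left 2)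
  refine Summable.of_nonneg_of_le
    (fun p => mul_nonneg (mul_nonneg (hb p.1) (hb p.2)) (sq_nonneg _)) ?_ hG
  intro p
  have hjk : (0:ℝ) ≤ (bb C D ρ p.1 * (p.1:ℝ)) * (bb C D ρ p.2 * (p.2:ℝ)) :=
    mul_nonneg (hnn1 _) (hnn1 _)
  have e : Tterm C D ρ p
      = (bb C D ρ p.1 * (p.1:ℝ)^2) * bb C D ρ p.2
        + bb C D ρ p.1 * (bb C D ρ p.2 * (p.2:ℝ)^2)
        - 2 * ((bb C D ρ p.1 * (p.1:ℝ)) * (bb C D ρ p.2 * (p.2:ℝ))) := by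
    simp only [Tterm]; ring
  rw [e]; linarith

lemma T_value (hC : 0 ≤ C) (hD : 0 ≤ D) (hρ0 : 0 < ρ) (hρ1 : ρ < 1) :
    ∑' p : ℕ × ℕ, Tterm C D ρ p
      = 2 * ((D * C * (1 - ρ^2) + C^2 * ρ) / (1 - ρ)^4) := by
  have h1ρ : (1 : ℝ) - ρ ≠ 0 := by intro h; nlinarith
  have h0 := bb_summ (C := C) (D := D) (ρ := ρ) 0 hC hD hρ0 hρ1
  have h1 := bb_summ (C := C) (D := D) (ρ := ρ) 1 hC hD hρ0 hρ1
  have h2 := bb_summ (C := C) (D := D) (ρ := ρ) 2 hC hD hρ0 hρ1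
  simp only [pow_zero, mul_one, pow_one] at h0 h1 h2
  have hb := bb_nonneg (C := C) (D := D) (ρ := ρ) hC hD hρ0.le
  have hnn2 : ∀ n : ℕ, (0:ℝ) ≤ bb C D ρ n * (n:ℝ)^2 :=
    fun n => mul_nonneg (hb n) (sq_nonneg _)
  have hnn1 : ∀ n : ℕ, (0:ℝ) ≤ bb C D ρ n * (n:ℝ) :=
    fun n => mul_nonneg (hb n) (Nat.cast_nonneg _)
  have hs20 := (h2.mul_of_nonneg h0 hnn2 hb)
  have hs02 := (h0.mul_of_nonneg h2 hb hnn2)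
  have hs11 := (h1.mul_of_nonneg h1 hnn1 hnn1)
  have key : ∀ p : ℕ × ℕ, Tterm C D ρ p
      = (bb C D ρ p.1 * (p.1:ℝ)^2) * bb C D ρ p.2
        + bb C D ρ p.1 * (bb C D ρ p.2 * (p.2:ℝ)^2)
        - 2 * ((bb C D ρ p.1 * (p.1:ℝ)) * (bb C D ρ p.2 * (p.2:ℝ))) := by
    intro p; simp only [Tterm]; ring
  calc ∑' p : ℕ × ℕ, Tterm C D ρ p
      = ∑' p : ℕ × ℕ, ((bb C D ρ p.1 * (p.1:ℝ)^2) * bb C D ρ p.2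
        + bb C D ρ p.1 * (bb C D ρ p.2 * (p.2:ℝ)^2)
        - 2 * ((bb C D ρ p.1 * (p.1:ℝ)) * (bb C D ρ p.2 * (p.2:ℝ)))) := tsum_congr key
    _ = (∑' n : ℕ, bb C D ρ n * (n:ℝ)^2) * (∑' n : ℕ, bb C D ρ n)
        + (∑' n : ℕ, bb C D ρ n) * (∑' n : ℕ, bb C D ρ n * (n:ℝ)^2)
        - 2 * ((∑' n : ℕ, bb C D ρ n * (n:ℝ)) * (∑' n : ℕ, bb C D ρ n * (n:ℝ))) := by
        rw [Summable.tsum_sub (hs20.add hs02) (hs11.mul_left 2), Summable.tsum_add hs20 hs02, tsum_mul_left,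
          ← Summable.tsum_mul_tsum h2 h0 hs20, ← Summable.tsum_mul_tsum h0 h2 hs02, ← Summable.tsum_mul_tsum h1 h1 hs11]
    _ = 2 * ((D * C * (1 - ρ^2) + C^2 * ρ) / (1 - ρ)^4) := by
        rw [bb_sum0 hC hD hρ0 hρ1, bb_sum1 hC hD hρ0 hρ1, bb_sum2 hC hD hρ0 hρ1]
        field_simp
        ring
end T

lemma cos_quad (t : ℝ) : 1 - Real.cos t ≤ t^2 / 2 := by
  have h1 := Real.cos_sq (t/2)
  have h2 := Real.sin_sq_add_cos_sq (t/2)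
  have h3 : Real.sin (t/2)^2 ≤ (t/2)^2 := Real.sin_sq_le_sq
  have ht : 2 * (t/2) = t := by ring
  rw [ht] at h1
  nlinarith

lemma exp_term_bound (μ h : ℝ) :
    ‖Complex.exp (Complex.I*μ*h) + Complex.exp (-(Complex.I*μ*h)) - 2‖
      ≤ μ^2 * h^2 := by
  set x : ℝ := μ*h with hx
  have e1 : Complex.I*(μ:ℂ)*(h:ℂ) = ((x : ℝ) : ℂ) * Complex.I := by rw [hx]; push_cast; ring
  have e2 : Complex.exp (Complex.I*μ*h) + Complex.exp (-(Complex.I*μ*h)) - 2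
      = ((2*Real.cos x - 2 : ℝ) : ℂ) := by
    rw [e1, ← neg_mul, ← Complex.ofReal_neg, Complex.exp_mul_I, Complex.exp_mul_I,
      ← Complex.ofReal_cos, ← Complex.ofReal_sin, ← Complex.ofReal_cos, ← Complex.ofReal_sin,
      Real.cos_neg, Real.sin_neg]
    push_cast
    ring
  rw [e2, Complex.norm_real, Real.norm_eq_abs]
  have h1 : |2*Real.cos x - 2| = 2*(1 - Real.cos x) := by
    rw [abs_of_nonpos (by nlinarith [Real.cos_le_one x])]; ring
  rw [h1]
  have := cos_quad x
  calc 2*(1-Real.cos x) ≤ 2*(x^2/2) := by linarith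
  _ = μ^2*h^2 := by rw [hx]; ring

section symb
variable {a : ℤ → ℂ} {C D ρ : ℝ}

lemma abs_a_nat (ha0 : ‖a 0‖ ≤ D)
    (hdecay : ∀ k : ℕ, 1 ≤ k → ‖a k‖ ≤ C * ρ ^ (k - 1)) :
    ∀ n : ℕ, ‖a n‖ ≤ bb C D ρ n
  | 0 => by simpa [bb] using ha0
  | (n+1) => by simpa [bb, Nat.add_sub_cancel] using hdecay (n+1) (by omega)

noncomputable def sterm (a : ℤ → ℂ) (θ : ℝ) (n : ℕ) : ℂ :=
  a n * Complex.exp (Complex.I*n*θ)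

noncomputable def cterm (a : ℤ → ℂ) (θ : ℝ) (n : ℕ) : ℂ :=
  (starRingEnd ℂ) (a n) * Complex.exp (-(Complex.I*n*θ))

lemma sterm_abs (θ : ℝ) (n : ℕ) : ‖sterm a θ n‖ = ‖a n‖ := by
  have e1 : Complex.I*(n:ℂ)*(θ:ℂ) = (((n:ℝ)*θ : ℝ):ℂ) * Complex.I := by push_cast; ring
  rw [sterm, norm_mul, e1, Complex.norm_exp_ofReal_mul_I, mul_one]

lemma cterm_abs (θ : ℝ) (n : ℕ) : ‖cterm a θ n‖ = ‖a n‖ := by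
  have e1 : -(Complex.I*(n:ℂ)*(θ:ℂ)) = ((-((n:ℝ)*θ) : ℝ):ℂ) * Complex.I := by push_cast; ring
  rw [cterm, norm_mul, e1, Complex.norm_exp_ofReal_mul_I, mul_one, Complex.norm_conj]

lemma cterm_eq_conj (θ : ℝ) (n : ℕ) : cterm a θ n = (starRingEnd ℂ) (sterm a θ n) := by
  rw [sterm, cterm, map_mul, ← Complex.exp_conj]
  congr 2
  simp [Complex.conj_I]

lemma summable_abs_sterm (ha0 : ‖a 0‖ ≤ D)
    (hdecay : ∀ k : ℕ, 1 ≤ k → ‖a k‖ ≤ C * ρ ^ (k - 1))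
    (hC : 0 ≤ C) (hD : 0 ≤ D) (hρ0 : 0 < ρ) (hρ1 : ρ < 1) (θ : ℝ) :
    Summable (fun n : ℕ => ‖sterm a θ n‖) := by
  have hbb : Summable (bb C D ρ) := by simpa using bb_summ (C := C) (D := D) 0 hC hD hρ0 hρ1
  refine Summable.of_nonneg_of_le (fun n => norm_nonneg _) (fun n => ?_) hbb
  rw [sterm_abs]
  exact abs_a_nat ha0 hdecay n

lemma symbol_nat (hcausal : ∀ k : ℤ, k ≤ -1 → a k = 0) (θ : ℝ) :
    symbol a θ = ∑' n : ℕ, sterm a θ n := by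
  rw [symbol]
  refine (Function.Injective.tsum_eq (g := (Nat.cast : ℕ → ℤ)) Nat.cast_injective ?_).symm.trans ?_
  · intro k hk
    rcases le_or_gt 0 k with h | h
    · exact ⟨k.toNat, by omega⟩
    · exfalso
      apply hk
      show a k * Complex.exp (Complex.I * ↑k * ↑θ) = 0
      rw [hcausal k (by omega), zero_mul]
  · apply tsum_congr
    intro n
    rw [sterm]
    norm_num

lemma hasSum_sterm (hcausal : ∀ k : ℤ, k ≤ -1 → a k = 0)
    (ha0 : ‖a 0‖ ≤ D)
    (hdecay : ∀ k : ℕ, 1 ≤ k → ‖a k‖ ≤ C * ρ ^ (k - 1))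
    (hC : 0 ≤ C) (hD : 0 ≤ D) (hρ0 : 0 < ρ) (hρ1 : ρ < 1) (θ : ℝ) :
    HasSum (sterm a θ) (symbol a θ) := by
  rw [symbol_nat hcausal]
  exact ((summable_abs_sterm ha0 hdecay hC hD hρ0 hρ1 θ).of_norm).hasSum

lemma hasSum_cterm (hcausal : ∀ k : ℤ, k ≤ -1 → a k = 0)
    (ha0 : ‖a 0‖ ≤ D)
    (hdecay : ∀ k : ℕ, 1 ≤ k → ‖a k‖ ≤ C * ρ ^ (k - 1))
    (hC : 0 ≤ C) (hD : 0 ≤ D) (hρ0 : 0 < ρ) (hρ1 : ρ < 1) (θ : ℝ) :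
    HasSum (cterm a θ) ((starRingEnd ℂ) (symbol a θ)) := by
  have he : cterm a θ = fun n => (starRingEnd ℂ) (sterm a θ n) := funext (cterm_eq_conj θ)
  rw [he]
  exact Complex.hasSum_conj'.mpr (hasSum_sterm hcausal ha0 hdecay hC hD hρ0 hρ1 θ)

end symb

section main
variable {a : ℤ → ℂ} {C D ρ : ℝ}

lemma secdiff (hcausal : ∀ k : ℤ, k ≤ -1 → a k = 0)
    (ha0 : ‖a 0‖ ≤ D)
    (hdecay : ∀ k : ℕ, 1 ≤ k → ‖a k‖ ≤ C * ρ ^ (k - 1))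
    (hC : 0 ≤ C) (hD : 0 ≤ D) (hρ0 : 0 < ρ) (hρ1 : ρ < 1) (x h : ℝ) :
    |‖symbol a (x+h)‖^2 + ‖symbol a (x-h)‖^2
        - 2*‖symbol a x‖^2|
      ≤ 2 * ((D * C * (1 - ρ^2) + C^2 * ρ) / (1 - ρ)^4) * h^2 := by
  have hnorm : ∀ θ : ℝ, Summable (fun n : ℕ => ‖sterm a θ n‖) :=
    fun θ => summable_abs_sterm ha0 hdecay hC hD hρ0 hρ1 θ
  have hnormc : ∀ θ : ℝ, Summable (fun n : ℕ => ‖cterm a θ n‖) := by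
    intro θ
    have : (fun n : ℕ => ‖cterm a θ n‖) = fun n : ℕ => ‖sterm a θ n‖ := by
      funext n
      rw [cterm_abs, sterm_abs]
    rw [this]; exact hnorm θ
  have hS : ∀ θ : ℝ, HasSum (sterm a θ) (symbol a θ) :=
    fun θ => hasSum_sterm hcausal ha0 hdecay hC hD hρ0 hρ1 θ
  have hCj : ∀ θ : ℝ, HasSum (cterm a θ) ((starRingEnd ℂ) (symbol a θ)) :=
    fun θ => hasSum_cterm hcausal ha0 hdecay hC hD hρ0 hρ1 θ
  have hprod : ∀ θ : ℝ, ((‖symbol a θ‖^2 : ℝ) : ℂ)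
      = ∑' p : ℕ × ℕ, sterm a θ p.1 * cterm a θ p.2 := by
    intro θ
    have h1 : ((‖symbol a θ‖^2 : ℝ) : ℂ)
        = symbol a θ * (starRingEnd ℂ) (symbol a θ) := by
      rw [Complex.sq_norm, Complex.mul_conj]
    rw [h1, ← (hCj θ).tsum_eq, ← (hS θ).tsum_eq,
      tsum_mul_tsum_of_summable_norm (hnorm θ) (hnormc θ)]
  have hsum_prod : ∀ θ : ℝ, Summable (fun p : ℕ × ℕ => sterm a θ p.1 * cterm a θ p.2) :=
    fun θ => ((hnorm θ).mul_norm (hnormc θ)).of_norm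
  set Δ : ℕ × ℕ → ℂ := fun p => sterm a (x+h) p.1 * cterm a (x+h) p.2
      + sterm a (x-h) p.1 * cterm a (x-h) p.2 - 2 * (sterm a x p.1 * cterm a x p.2) with hΔ
  have key : ((‖symbol a (x+h)‖^2 + ‖symbol a (x-h)‖^2
      - 2*‖symbol a x‖^2 : ℝ) : ℂ) = ∑' p : ℕ × ℕ, Δ p := by
    rw [Complex.ofReal_sub, Complex.ofReal_add, Complex.ofReal_mul, Complex.ofReal_ofNat,
      hprod, hprod, hprod, ← Summable.tsum_add (hsum_prod (x+h)) (hsum_prod (x-h)), ← tsum_mul_left,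
      ← Summable.tsum_sub ((hsum_prod (x+h)).add (hsum_prod (x-h))) ((hsum_prod x).mul_left 2)]
  have hfactor : ∀ (θ : ℝ) (p : ℕ × ℕ), sterm a θ p.1 * cterm a θ p.2
      = a p.1 * (starRingEnd ℂ) (a p.2)
        * Complex.exp (Complex.I * (((p.1:ℝ) - (p.2:ℝ) : ℝ):ℂ) * θ) := by
    intro θ p
    rw [sterm, cterm]
    have e3 : Complex.I*(p.1:ℂ)*(θ:ℂ) + -(Complex.I*(p.2:ℂ)*(θ:ℂ))
        = Complex.I * (((p.1:ℝ) - (p.2:ℝ) : ℝ):ℂ) * θ := by push_cast; ring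
    calc a p.1 * Complex.exp (Complex.I*(p.1:ℂ)*(θ:ℂ))
          * ((starRingEnd ℂ) (a p.2) * Complex.exp (-(Complex.I*(p.2:ℂ)*(θ:ℂ))))
        = a p.1 * (starRingEnd ℂ) (a p.2)
          * (Complex.exp (Complex.I*(p.1:ℂ)*(θ:ℂ)) * Complex.exp (-(Complex.I*(p.2:ℂ)*(θ:ℂ)))) := by
          ring
      _ = _ := by rw [← Complex.exp_add, e3]
  have hle : ∀ p : ℕ × ℕ, ‖Δ p‖ ≤ Tterm C D ρ p * h^2 := by
    intro p
    set μ : ℝ := (p.1:ℝ) - (p.2:ℝ) with hμ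
    have hb : Complex.exp (Complex.I*(μ:ℂ)*((x+h:ℝ):ℂ)) + Complex.exp (Complex.I*(μ:ℂ)*((x-h:ℝ):ℂ))
        - 2*Complex.exp (Complex.I*(μ:ℂ)*(x:ℂ))
        = Complex.exp (Complex.I*(μ:ℂ)*(x:ℂ))
          * (Complex.exp (Complex.I*(μ:ℂ)*(h:ℂ)) + Complex.exp (-(Complex.I*(μ:ℂ)*(h:ℂ))) - 2) := by
      have e1 : Complex.I*(μ:ℂ)*((x+h:ℝ):ℂ) = Complex.I*(μ:ℂ)*(x:ℂ) + Complex.I*(μ:ℂ)*(h:ℂ) := by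
        push_cast; ring
      have e2 : Complex.I*(μ:ℂ)*((x-h:ℝ):ℂ) = Complex.I*(μ:ℂ)*(x:ℂ) + -(Complex.I*(μ:ℂ)*(h:ℂ)) := by
        push_cast; ring
      rw [e1, e2, Complex.exp_add, Complex.exp_add]
      ring
    have hΔp : Δ p = a p.1 * (starRingEnd ℂ) (a p.2) * (Complex.exp (Complex.I*(μ:ℂ)*(x:ℂ))
        * (Complex.exp (Complex.I*(μ:ℂ)*(h:ℂ)) + Complex.exp (-(Complex.I*(μ:ℂ)*(h:ℂ))) - 2)) := by
      rw [hΔ]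
      simp only
      rw [hfactor, hfactor, hfactor, ← hb, ← hμ]
      ring
    rw [hΔp, norm_mul, norm_mul, norm_mul, Complex.norm_conj]
    have hexp1 : ‖Complex.exp (Complex.I*(μ:ℂ)*(x:ℂ))‖ = 1 := by
      have e1 : Complex.I*(μ:ℂ)*(x:ℂ) = ((μ*x : ℝ):ℂ) * Complex.I := by push_cast; ring
      rw [e1, Complex.norm_exp_ofReal_mul_I]
    rw [hexp1, one_mul]
    have hbound := exp_term_bound μ h
    have h1 : ‖a p.1‖ * ‖a p.2‖
        ≤ bb C D ρ p.1 * bb C D ρ p.2 :=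
      mul_le_mul (abs_a_nat ha0 hdecay p.1) (abs_a_nat ha0 hdecay p.2)
        (norm_nonneg _) (bb_nonneg hC hD hρ0.le _)
    calc ‖a p.1‖ * ‖a p.2‖
          * ‖Complex.exp (Complex.I*(μ:ℂ)*(h:ℂ))
            + Complex.exp (-(Complex.I*(μ:ℂ)*(h:ℂ))) - 2‖
        ≤ (bb C D ρ p.1 * bb C D ρ p.2) * (μ^2 * h^2) := by
          apply mul_le_mul h1 hbound (norm_nonneg _)
          exact mul_nonneg (bb_nonneg hC hD hρ0.le _) (bb_nonneg hC hD hρ0.le _)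
      _ = Tterm C D ρ p * h^2 := by rw [Tterm, hμ]; ring
  have hTh : Summable (fun p : ℕ × ℕ => Tterm C D ρ p * h^2) :=
    (T_summable hC hD hρ0 hρ1).mul_right _
  have hnormΔ : Summable (fun p : ℕ × ℕ => ‖Δ p‖) :=
    Summable.of_nonneg_of_le (fun p => norm_nonneg _) hle hTh
  calc |‖symbol a (x+h)‖^2 + ‖symbol a (x-h)‖^2
      - 2*‖symbol a x‖^2|
      = ‖((‖symbol a (x+h)‖^2 + ‖symbol a (x-h)‖^2
        - 2*‖symbol a x‖^2 : ℝ) : ℂ)‖ := (Complex.norm_real _).symm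
    _ = ‖∑' p : ℕ × ℕ, Δ p‖ := by rw [key]
    _ ≤ ∑' p : ℕ × ℕ, ‖Δ p‖ := norm_tsum_le_tsum_norm hnormΔ
    _ ≤ ∑' p : ℕ × ℕ, Tterm C D ρ p * h^2 := Summable.tsum_le_tsum hle hnormΔ hTh
    _ = (∑' p : ℕ × ℕ, Tterm C D ρ p) * h^2 := tsum_mul_right
    _ = 2 * ((D * C * (1 - ρ^2) + C^2 * ρ) / (1 - ρ)^4) * h^2 := by
        rw [T_value hC hD hρ0 hρ1]
end main

section final
variable {a : ℤ → ℂ} {C D ρ : ℝ}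

lemma symbol_periodic (a : ℤ → ℂ) : Function.Periodic (fun θ => symbol a θ) (2*π) := by
  intro θ
  simp only [symbol]
  apply tsum_congr
  intro k
  congr 1
  have e : Complex.I * k * ((θ + 2*π : ℝ):ℂ) = Complex.I*k*θ + k * (2*π*Complex.I) := by
    push_cast; ring
  rw [e, Complex.exp_add, Complex.exp_int_mul_two_pi_mul_I, mul_one]

lemma max_global (hcausal : ∀ k : ℤ, k ≤ -1 → a k = 0)
    (ha0 : ‖a 0‖ ≤ D)
    (hdecay : ∀ k : ℕ, 1 ≤ k → ‖a k‖ ≤ C * ρ ^ (k - 1))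
    (hC : 0 ≤ C) (hD : 0 ≤ D) (hρ0 : 0 < ρ) (hρ1 : ρ < 1)
    {θ₀ : ℝ} (hmax : ‖symbol a θ₀‖ = symbolSup a) (θ : ℝ) :
    ‖symbol a θ‖ ≤ ‖symbol a θ₀‖ := by
  have hbdd : BddAbove ((fun θ => ‖symbol a θ‖) '' Set.Icc (-π) π) := by
    refine ⟨∑' n : ℕ, bb C D ρ n, ?_⟩
    rintro y ⟨θ', _, rfl⟩
    have h1 : ‖symbol a θ'‖ ≤ ∑' n : ℕ, ‖sterm a θ' n‖ := by
      rw [symbol_nat hcausal]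
      exact norm_tsum_le_tsum_norm (summable_abs_sterm ha0 hdecay hC hD hρ0 hρ1 θ')
    refine h1.trans (Summable.tsum_le_tsum (fun n => ?_)
      (summable_abs_sterm ha0 hdecay hC hD hρ0 hρ1 θ')
      (by simpa using bb_summ (C := C) (D := D) 0 hC hD hρ0 hρ1))
    rw [sterm_abs]
    exact abs_a_nat ha0 hdecay n
  -- reduce θ to the interval
  set θ' : ℝ := toIocMod Real.two_pi_pos (-π) θ with hθ'
  have hmem : θ' ∈ Set.Ioc (-π) (-π + 2*π) := toIocMod_mem_Ioc Real.two_pi_pos (-π) θ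
  have hmem' : θ' ∈ Set.Icc (-π) π := by
    constructor
    · exact hmem.1.le
    · have := hmem.2; linarith
  have heq : ‖symbol a θ'‖ = ‖symbol a θ‖ := by
    have hsub : θ - θ' = (toIocDiv Real.two_pi_pos (-π) θ : ℤ) • (2*π) :=
      (self_sub_toIocMod Real.two_pi_pos (-π) θ)
    have : θ' = θ - (toIocDiv Real.two_pi_pos (-π) θ : ℤ) • (2*π) := by
      rw [← hsub]; ring
    rw [this, (symbol_periodic a).sub_zsmul_eq]
  rw [← heq, hmax]
  exact le_csSup hbdd (Set.mem_image_of_mem _ hmem')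
end final

theorem stmt2 (a : ℤ → ℂ) (C D ρ θ₀ : ℝ)
    (hcausal : ∀ k : ℤ, k ≤ -1 → a k = 0)
    (hρ : ρ ∈ Set.Ioo (0 : ℝ) 1) (hC : 0 < C) (hD : 0 ≤ D)
    (ha0 : ‖a 0‖ ≤ D)
    (hdecay : ∀ k : ℕ, 1 ≤ k → ‖a k‖ ≤ C * ρ ^ (k - 1))
    (hθ₀ : θ₀ ∈ Set.Icc (-π) π)
    (hmax : ‖symbol a θ₀‖ = symbolSup a) :
    ∀ θ ∈ Set.Icc (-π) π,
      symbolSup a ^ 2 - ‖symbol a θ‖ ^ 2 ≤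
        (D * C * (1 - ρ ^ 2) + C ^ 2 * ρ) / (1 - ρ) ^ 4 * (θ - θ₀) ^ 2 := by
  obtain ⟨hρ0, hρ1⟩ := hρ
  set K : ℝ := (D * C * (1 - ρ^2) + C^2 * ρ) / (1 - ρ)^4 with hK
  have hKnn : 0 ≤ K := by
    apply div_nonneg
    · have h1 : (0:ℝ) ≤ 1 - ρ^2 := by nlinarith
      nlinarith [mul_nonneg (mul_nonneg hD hC.le) h1, mul_nonneg (pow_nonneg hC.le 2) hρ0.le]
    · positivity
  set fa : ℝ → ℝ := fun θ => ‖symbol a θ‖^2 with hfa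
  set g : ℝ → ℝ := fun h => fa θ₀ - fa (θ₀ + h) with hg
  have hg0 : ∀ h, 0 ≤ g h := by
    intro h
    have := max_global hcausal ha0 hdecay hC.le hD hρ0 hρ1 hmax (θ₀ + h)
    have h2 : fa (θ₀ + h) ≤ fa θ₀ := by
      simp only [hfa]
      exact pow_le_pow_left₀ (norm_nonneg _) this 2
    simp only [hg]
    linarith
  have hsec : ∀ x h : ℝ, |fa (x+h) + fa (x-h) - 2*fa x| ≤ 2*K*h^2 := by
    intro x h
    have h0 := secdiff hcausal ha0 hdecay hC.le hD hρ0 hρ1 x h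
    simp only [hfa]
    rw [hK]
    exact h0
  have h2K : ∀ h, g h ≤ 2*K*h^2 := by
    intro h
    have h1 := hsec θ₀ h
    have h2 := hg0 (-h)
    have e1 : θ₀ + -h = θ₀ - h := by ring
    rw [hg] at h2 ⊢
    simp only [e1] at h2
    rw [abs_le] at h1
    simp only [hfa] at h1 h2 ⊢
    nlinarith [h1.1]
  have hhalf : ∀ h, g h ≤ 2 * g (h/2) + K*h^2/2 := by
    intro h
    have h1 := hsec (θ₀ + h/2) (h/2)
    have e1 : θ₀ + h/2 + h/2 = θ₀ + h := by ring
    have e2 : θ₀ + h/2 - h/2 = θ₀ := by ring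
    rw [e1, e2, abs_le] at h1
    have e3 : 2*K*(h/2)^2 = K*h^2/2 := by ring
    rw [e3] at h1
    simp only [hg, hfa] at h1 ⊢
    nlinarith [h1.1]
  have iter : ∀ (n : ℕ) (h : ℝ), g h ≤ 2^n * g (h/2^n) + (1 - (1/2:ℝ)^n) * (K * h^2) := by
    intro n
    induction n with
    | zero => intro h; simp
    | succ n ih =>
      intro h
      have h1 := hhalf h
      have h2 := ih (h/2)
      have e1 : h/2/2^n = h/2^(n+1) := by ring
      rw [e1] at h2
      have e2 : (1 - (1/2:ℝ)^n) * (K * (h/2)^2) = (1 - (1/2:ℝ)^n) * (K * h^2) / 4 := by ring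
      rw [e2] at h2
      have hp : (0:ℝ) < 2^n := by positivity
      have hKh : 0 ≤ K * h^2 := mul_nonneg hKnn (sq_nonneg _)
      have hpow : (0:ℝ) ≤ (1/2:ℝ)^n := by positivity
      have hpow1 : (1/2:ℝ)^n ≤ 1 := pow_le_one₀ (by norm_num) (by norm_num)
      calc g h ≤ 2 * g (h/2) + K*h^2/2 := h1
        _ ≤ 2 * (2^n * g (h/2^(n+1)) + (1 - (1/2:ℝ)^n) * (K * h^2) / 4) + K*h^2/2 := by
            nlinarith [h2]
        _ = 2^(n+1) * g (h/2^(n+1)) + (1/2 - (1/2:ℝ)^n/2 + 1/2) * (K * h^2) := by ring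
        _ = 2^(n+1) * g (h/2^(n+1)) + (1 - (1/2:ℝ)^(n+1)) * (K * h^2) := by ring_nf
  have gbound : ∀ h, g h ≤ K * h^2 := by
    intro h
    have hub : ∀ n : ℕ, g h ≤ 2*(K*h^2)*(1/2:ℝ)^n + K*h^2 := by
      intro n
      have h1 := iter n h
      have h2 := h2K (h/2^n)
      have hp : (0:ℝ) < 2^n := by positivity
      have e1 : 2^n * (2*K*(h/2^n)^2) = 2*(K*h^2)*(1/2:ℝ)^n := by
        field_simp
        have h2n : (2:ℝ)^n * (1/2)^n = 1 := by rw [← mul_pow]; norm_num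
        linear_combination (-(K*h^2)) * h2n
      have hpow : (0:ℝ) ≤ (1/2:ℝ)^n := by positivity
      have hKh : 0 ≤ K * h^2 := mul_nonneg hKnn (sq_nonneg _)
      calc g h ≤ 2^n * g (h/2^n) + (1 - (1/2:ℝ)^n) * (K * h^2) := h1
        _ ≤ 2^n * (2*K*(h/2^n)^2) + (1 - (1/2:ℝ)^n) * (K * h^2) := by nlinarith [h2]
        _ = 2*(K*h^2)*(1/2:ℝ)^n + (1 - (1/2:ℝ)^n) * (K * h^2) := by rw [e1]
        _ ≤ 2*(K*h^2)*(1/2:ℝ)^n + K*h^2 := by nlinarith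
    have htend : Filter.Tendsto (fun n : ℕ => 2*(K*h^2)*(1/2:ℝ)^n + K*h^2)
        Filter.atTop (nhds (K*h^2)) := by
      have h0 : Filter.Tendsto (fun n : ℕ => (1/2:ℝ)^n) Filter.atTop (nhds 0) :=
        tendsto_pow_atTop_nhds_zero_of_lt_one (by norm_num) (by norm_num)
      have := (h0.const_mul (2*(K*h^2))).add_const (K*h^2)
      simpa using this
    exact ge_of_tendsto' htend hub
  intro θ hθ
  rw [← hmax]
  have h2 := gbound (θ - θ₀)
  have e1 : θ₀ + (θ - θ₀) = θ := by ring
  simp only [hg, hfa, e1] at h2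
  calc ‖symbol a θ₀‖ ^ 2 - ‖symbol a θ‖ ^ 2
      ≤ K * (θ - θ₀)^2 := h2
    _ = (D * C * (1 - ρ ^ 2) + C ^ 2 * ρ) / (1 - ρ) ^ 4 * (θ - θ₀) ^ 2 := by rw [hK]
end

section
/- Let a, b : ℤ → ℂ be absolutely summable, and define c : ℤ → ℂ by c_m := ∑_{k∈ℤ} a_{m−k} b_k (the Fourier coefficients of the product of the symbols of a and b). Then for every n ≥ 1 and all integers 0 ≤ i, j ≤ n−1, ∑_{k=0}^{n−1} a_{i−k} b_{k−j} = c_{i−j} − ∑_{q=0}^∞ a_{i+q+1} · b_{−(j+q+1)} − ∑_{q=0}^∞ a_{i−n−q} · b_{n−j+q}. (This is the entrywise form of Widom's identity T_n(a)T_n(b) = T_n(ab) − P_n H(a)H(b̃) P_n − W_n H(ã)H(b) W_n.) -/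
theorem stmt5 (a b : ℤ → ℂ)
    (ha : Summable fun k : ℤ => ‖a k‖)
    (hb : Summable fun k : ℤ => ‖b k‖)
    (c : ℤ → ℂ) (hc : ∀ m : ℤ, c m = ∑' k : ℤ, a (m - k) * b k) :
    ∀ n : ℕ, 1 ≤ n → ∀ i j : ℕ, i ≤ n - 1 → j ≤ n - 1 →
      (∑ k ∈ Finset.range n, a ((i : ℤ) - (k : ℤ)) * b ((k : ℤ) - (j : ℤ))) =
        c ((i : ℤ) - (j : ℤ)) -
          (∑' q : ℕ, a ((i : ℤ) + (q : ℤ) + 1) * b (-((j : ℤ) + (q : ℤ) + 1))) -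
          (∑' q : ℕ, a ((i : ℤ) - (n : ℤ) - (q : ℤ)) * b ((n : ℤ) - (j : ℤ) + (q : ℤ))) := by
  intro n hn i j hi hj
  set f : ℤ → ℂ := fun k => a ((i : ℤ) - k) * b (k - (j : ℤ)) with hf
  -- b is bounded
  set B : ℝ := ∑' k : ℤ, ‖b k‖ with hB
  have hbB : ∀ m : ℤ, ‖b m‖ ≤ B := fun m =>
    Summable.le_tsum hb m (fun _ _ => norm_nonneg _)
  have hsa : Summable fun k : ℤ => ‖a ((i : ℤ) - k)‖ :=
    ((Equiv.subLeft (i : ℤ)).summable_iff (f := fun k => ‖a k‖)).2 ha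
  have hsf : Summable f := by
    apply Summable.of_norm
    refine Summable.of_nonneg_of_le (fun k => norm_nonneg _) ?_ (hsa.mul_right B)
    intro k
    simp only [hf, norm_mul]
    exact mul_le_mul_of_nonneg_left (hbB _) (norm_nonneg _)
  -- tsum over ℤ of f equals c (i - j)
  have hcij : c ((i : ℤ) - (j : ℤ)) = ∑' k : ℤ, f k := by
    rw [hc]
    rw [← (Equiv.subRight (j : ℤ)).tsum_eq (f := fun k => a ((i : ℤ) - (j : ℤ) - k) * b k)]
    apply tsum_congr
    intro k
    simp only [Equiv.subRight_apply, hf]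
    ring_nf
  have hsf_nat : Summable fun q : ℕ => f q := hsf.comp_injective (fun x y h => by exact_mod_cast h)
  have hsf_neg : Summable fun q : ℕ => f (-(q + 1)) :=
    hsf.comp_injective (fun x y h => by omega)
  have hsplit : ∑' k : ℤ, f k = (∑' q : ℕ, f q) + ∑' q : ℕ, f (-(q + 1)) :=
    tsum_of_nat_of_neg_add_one hsf_nat hsf_neg
  have htail : (∑ k ∈ Finset.range n, f k) + (∑' q : ℕ, f (q + n)) = ∑' q : ℕ, f q :=
    hsf_nat.sum_add_tsum_nat_add n
  have hneg : (∑' q : ℕ, f (-(q + 1))) =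
      ∑' q : ℕ, a ((i : ℤ) + (q : ℤ) + 1) * b (-((j : ℤ) + (q : ℤ) + 1)) := by
    apply tsum_congr; intro q; simp only [hf]; ring_nf
  have htl : (∑' q : ℕ, f (q + n)) =
      ∑' q : ℕ, a ((i : ℤ) - (n : ℤ) - (q : ℤ)) * b ((n : ℤ) - (j : ℤ) + (q : ℤ)) := by
    apply tsum_congr; intro q; simp only [hf]; ring_nf
  have hfin : (∑ k ∈ Finset.range n, a ((i : ℤ) - (k : ℤ)) * b ((k : ℤ) - (j : ℤ))) =
      ∑ k ∈ Finset.range n, f k := rfl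
  rw [hfin, hcij, hsplit, ← htail, hneg, htl]
  ring
end

section
/- Let a : ℤ → ℂ be absolutely summable with a_k = 0 for all k ≤ −1, and define c : ℤ → ℂ by c_m := ∑_{k∈ℤ} a_k · conj(a_{k−m}) (the Fourier coefficients of |a(e^{iθ})|²). Then for every n ≥ 1 and all integers 0 ≤ i, j ≤ n−1, ∑_{k=0}^{n−1} a_{i−k} · conj(a_{j−k}) = c_{i−j} − ∑_{q=0}^∞ a_{i+1+q} · conj(a_{j+1+q}). (This is the entrywise form of the identity T_n(a) T_n(a)* = T_n(|a|²) − P_n H(a) H(conj(a)~) P_n for causal a.) -/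
theorem stmt6 (a : ℤ → ℂ)
    (ha : Summable fun k : ℤ => ‖a k‖)
    (hcausal : ∀ k : ℤ, k ≤ -1 → a k = 0)
    (c : ℤ → ℂ) (hc : ∀ m : ℤ, c m = ∑' k : ℤ, a k * (starRingEnd ℂ) (a (k - m))) :
    ∀ n : ℕ, 1 ≤ n → ∀ i j : ℕ, i ≤ n - 1 → j ≤ n - 1 →
      (∑ k ∈ Finset.range n, a ((i : ℤ) - (k : ℤ)) * (starRingEnd ℂ) (a ((j : ℤ) - (k : ℤ)))) =
        c ((i : ℤ) - (j : ℤ)) -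
          ∑' q : ℕ, a ((i : ℤ) + 1 + (q : ℤ)) * (starRingEnd ℂ) (a ((j : ℤ) + 1 + (q : ℤ))) := by
  intro n hn i j hi hj
  have hin : i + 1 ≤ n := by omega
  set m : ℤ := (i : ℤ) - (j : ℤ) with hm
  set f : ℤ → ℂ := fun t => a t * (starRingEnd ℂ) (a (t - m)) with hf
  set C : ℝ := ∑' k : ℤ, ‖a k‖ with hC
  have habs : ∀ k : ℤ, ‖a k‖ ≤ C :=
    fun k => Summable.le_tsum ha k (fun _ _ => norm_nonneg _)
  have hsum : Summable f := by
    apply Summable.of_norm_bounded (ha.mul_right C)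
    intro t
    simp only [hf, norm_mul, Complex.norm_conj]
    exact mul_le_mul_of_nonneg_left (habs _) (norm_nonneg _)
  have hsupp : Function.support f ⊆ Set.range ((↑) : ℕ → ℤ) := by
    intro t ht
    by_contra h
    have ht0 : t ≤ -1 := by
      rcases lt_or_ge t 0 with h' | h'
      · omega
      · exact absurd ⟨t.toNat, Int.toNat_of_nonneg h'⟩ h
    exact ht (by simp [hf, hcausal t ht0])
  have h1 : ∑' t : ℕ, f t = ∑' t : ℤ, f t :=
    Function.Injective.tsum_eq Nat.cast_injective hsupp
  have hsumN : Summable (fun t : ℕ => f t) :=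
    hsum.comp_injective Nat.cast_injective
  have h2 := Summable.sum_add_tsum_nat_add (f := fun t : ℕ => f t) (i + 1) hsumN
  have hcm : c m = ∑' t : ℤ, f t := hc m
  have hT : (∑' q : ℕ, a ((i : ℤ) + 1 + (q : ℤ)) * (starRingEnd ℂ) (a ((j : ℤ) + 1 + (q : ℤ))))
      = ∑' q : ℕ, f ((q + (i + 1) : ℕ) : ℤ) := by
    apply tsum_congr
    intro q
    simp only [hf]
    congr 2
    · push_cast; ring
    · push_cast [hm]; ring
  have h3 : (∑ k ∈ Finset.range n, a ((i : ℤ) - (k : ℤ)) * (starRingEnd ℂ) (a ((j : ℤ) - (k : ℤ))))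
      = ∑ k ∈ Finset.range (i + 1), a ((i : ℤ) - (k : ℤ)) * (starRingEnd ℂ) (a ((j : ℤ) - (k : ℤ))) := by
    refine (Finset.sum_subset (Finset.range_subset_range.2 hin) ?_).symm
    intro k _ hk
    have : (i : ℤ) - (k : ℤ) ≤ -1 := by
      simp only [Finset.mem_range] at hk
      omega
    rw [hcausal _ this, zero_mul]
  have h4 : (∑ k ∈ Finset.range (i + 1), a ((i : ℤ) - (k : ℤ)) * (starRingEnd ℂ) (a ((j : ℤ) - (k : ℤ))))
      = ∑ t ∈ Finset.range (i + 1), f (t : ℤ) := by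
    rw [← Finset.sum_range_reflect (fun t : ℕ => f (t : ℤ)) (i + 1)]
    apply Finset.sum_congr rfl
    intro k hk
    simp only [Finset.mem_range] at hk
    have hk' : k ≤ i := by omega
    simp only [hf, hm]
    have e1 : ((i + 1 - 1 - k : ℕ) : ℤ) = (i : ℤ) - k := by omega
    rw [e1]
    congr 2
    ring
  rw [h1] at h2
  rw [h3, h4, hcm, hT, ← h2]
  ring
end

section
/- For all positive integers m and t, ∫_{−π}^{π} |∑_{k=0}^{m} e^{ikθ}|^{2t} dθ ≥ (16/(9π)) · (1/√t) · (m+1)^{2t−1}. -/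
open scoped Real

private lemma aux_int (C D b : ℝ) :
    ∫ θ in (-b)..b, C * (1 - D * θ ^ 2) = C * (2 * b - D * (2 * b ^ 3 / 3)) := by
  have h1 : IntervalIntegrable (fun θ : ℝ => D * θ ^ 2) MeasureTheory.volume (-b) b :=
    (by fun_prop : Continuous fun θ : ℝ => D * θ ^ 2).intervalIntegrable _ _
  rw [intervalIntegral.integral_const_mul,
    intervalIntegral.integral_sub intervalIntegrable_const h1,
    intervalIntegral.integral_const, intervalIntegral.integral_const_mul,
    integral_pow]
  simp only [smul_eq_mul, mul_one]
  push_cast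
  ring

set_option maxHeartbeats 1000000 in
theorem stmt8 (m t : ℕ) (hm : 1 ≤ m) (ht : 1 ≤ t) :
    (∫ θ in (-π)..π,
        ‖∑ k ∈ Finset.range (m + 1), Complex.exp (Complex.I * k * θ)‖ ^ (2 * t)) ≥
      16 / (9 * π) * (1 / Real.sqrt t) * (m + 1 : ℝ) ^ (2 * t - 1) := by
  have hπ : (3:ℝ) < π := by have := Real.pi_gt_d6; linarith
  have ht0 : (0:ℝ) < t := by exact_mod_cast ht
  have ht1 : (1:ℝ) ≤ t := by exact_mod_cast ht
  set s := Real.sqrt t with hs_def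
  have hs0 : 0 < s := Real.sqrt_pos.mpr ht0
  have hs2 : s ^ 2 = t := Real.sq_sqrt ht0.le
  have hs1 : 1 ≤ s := by nlinarith
  have hm0 : (0:ℝ) < m := by exact_mod_cast hm
  have hm1 : (1:ℝ) ≤ m := by exact_mod_cast hm
  have hms : (1:ℝ) ≤ (m:ℝ) * s := by
    nlinarith [mul_nonneg (by linarith : (0:ℝ) ≤ (m:ℝ) - 1) (by linarith : (0:ℝ) ≤ s - 1)]
  set a : ℝ := 1 / (m * s) with ha_def
  have ha0 : 0 < a := by positivity
  have haπ : a ≤ π := by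
    rw [ha_def, div_le_iff₀ (by positivity)]
    nlinarith
  have haa : (t:ℝ) * (m:ℝ) ^ 2 * a ^ 2 = 1 := by
    rw [ha_def]
    field_simp
    nlinarith
  set f : ℝ → ℝ := fun θ =>
    ‖∑ k ∈ Finset.range (m + 1), Complex.exp (Complex.I * k * θ)‖ ^ (2 * t)
    with hf_def
  have hf_cont : Continuous f := by
    apply Continuous.pow
    apply continuous_norm.comp
    apply continuous_finset_sum
    intro k _
    exact Complex.continuous_exp.comp (by fun_prop)
  set g : ℝ → ℝ := fun θ => ((m:ℝ) + 1) ^ (2 * t) * (1 - (t:ℝ) * (m:ℝ) ^ 2 * θ ^ 2)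
    with hg_def
  have hg_cont : Continuous g := by fun_prop
  -- pointwise bound on [-a, a]
  have hpoint : ∀ θ ∈ Set.Icc (-a) a, g θ ≤ f θ := by
    intro θ hθ
    have hθ2 : θ ^ 2 ≤ a ^ 2 := sq_le_sq' hθ.1 hθ.2
    have hmt : (t:ℝ) * (m:ℝ) ^ 2 * θ ^ 2 ≤ 1 := by
      nlinarith [mul_le_mul_of_nonneg_left hθ2 (by positivity : (0:ℝ) ≤ (t:ℝ) * (m:ℝ) ^ 2)]
    have hm2 : (m:ℝ) ^ 2 * θ ^ 2 ≤ 1 := by nlinarith [sq_nonneg ((m:ℝ) * θ)]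
    set c : ℝ := ∑ k ∈ Finset.range (m + 1), Real.cos (k * θ) with hc_def
    have hre : (∑ k ∈ Finset.range (m + 1), Complex.exp (Complex.I * k * θ)).re = c := by
      rw [Complex.re_sum]
      refine Finset.sum_congr rfl fun k _ => ?_
      rw [show Complex.I * k * θ = ((k * θ : ℝ) : ℂ) * Complex.I by push_cast; ring]
      exact Complex.exp_ofReal_mul_I_re _
    have hcb : ((m:ℝ) + 1) * (1 - (m:ℝ) ^ 2 * θ ^ 2 / 2) ≤ c := by
      have hstep : ∀ k ∈ Finset.range (m + 1),
          1 - (m:ℝ) ^ 2 * θ ^ 2 / 2 ≤ Real.cos (k * θ) := by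
        intro k hk
        have hk' : (k:ℝ) ≤ m := by
          exact_mod_cast Nat.le_of_lt_succ (Finset.mem_range.mp hk)
        have h1 : 1 - ((k:ℝ) * θ) ^ 2 / 2 ≤ Real.cos (k * θ) :=
          Real.one_sub_sq_div_two_le_cos
        have hk0 : (0:ℝ) ≤ k := Nat.cast_nonneg k
        nlinarith [mul_nonneg (by nlinarith : (0:ℝ) ≤ (m:ℝ) ^ 2 - (k:ℝ) ^ 2) (sq_nonneg θ)]
      calc ((m:ℝ) + 1) * (1 - (m:ℝ) ^ 2 * θ ^ 2 / 2)
          = ∑ _k ∈ Finset.range (m + 1), (1 - (m:ℝ) ^ 2 * θ ^ 2 / 2) := by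
            rw [Finset.sum_const, Finset.card_range, nsmul_eq_mul]; push_cast; ring
        _ ≤ c := Finset.sum_le_sum hstep
    have hcpos : 0 ≤ ((m:ℝ) + 1) * (1 - (m:ℝ) ^ 2 * θ ^ 2 / 2) := by nlinarith
    have hcabs : c ≤ ‖∑ k ∈ Finset.range (m + 1), Complex.exp (Complex.I * k * θ)‖ := by
      calc c = (∑ k ∈ Finset.range (m + 1), Complex.exp (Complex.I * k * θ)).re := hre.symm
        _ ≤ |(∑ k ∈ Finset.range (m + 1), Complex.exp (Complex.I * k * θ)).re| := le_abs_self _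
        _ ≤ _ := Complex.abs_re_le_norm _
    have hbern : 1 - (t:ℝ) * (m:ℝ) ^ 2 * θ ^ 2 ≤ (1 - (m:ℝ) ^ 2 * θ ^ 2 / 2) ^ (2 * t) := by
      have hb := one_add_mul_le_pow (a := -((m:ℝ) ^ 2 * θ ^ 2 / 2)) (by nlinarith) (2 * t)
      have h2 : (1 : ℝ) + ((2 * t : ℕ) : ℝ) * -((m:ℝ) ^ 2 * θ ^ 2 / 2)
          = 1 - (t:ℝ) * (m:ℝ) ^ 2 * θ ^ 2 := by push_cast; ring
      rw [h2] at hb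
      calc 1 - (t:ℝ) * (m:ℝ) ^ 2 * θ ^ 2 ≤ (1 + -((m:ℝ) ^ 2 * θ ^ 2 / 2)) ^ (2 * t) := hb
        _ = (1 - (m:ℝ) ^ 2 * θ ^ 2 / 2) ^ (2 * t) := by ring_nf
    calc g θ = ((m:ℝ) + 1) ^ (2 * t) * (1 - (t:ℝ) * (m:ℝ) ^ 2 * θ ^ 2) := rfl
      _ ≤ ((m:ℝ) + 1) ^ (2 * t) * (1 - (m:ℝ) ^ 2 * θ ^ 2 / 2) ^ (2 * t) :=
          mul_le_mul_of_nonneg_left hbern (by positivity)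
      _ = (((m:ℝ) + 1) * (1 - (m:ℝ) ^ 2 * θ ^ 2 / 2)) ^ (2 * t) := (mul_pow _ _ _).symm
      _ ≤ c ^ (2 * t) := pow_le_pow_left₀ hcpos hcb _
      _ ≤ _ := pow_le_pow_left₀ (le_trans hcpos hcb) hcabs _
  -- integral of g
  have hDa : (t:ℝ) * (m:ℝ) ^ 2 * a ^ 3 = a := by linear_combination a * haa
  have hgint : ∫ θ in (-a)..a, g θ = ((m:ℝ) + 1) ^ (2 * t) * (4 / 3 * a) := by
    rw [hg_def]
    rw [aux_int (((m:ℝ) + 1) ^ (2 * t)) ((t:ℝ) * (m:ℝ) ^ 2) a]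
    linear_combination (-(2/3) * ((m:ℝ) + 1) ^ (2 * t)) * hDa
  have step1 : ∫ θ in (-a)..a, g θ ≤ ∫ θ in (-a)..a, f θ :=
    intervalIntegral.integral_mono_on (by linarith)
      (hg_cont.intervalIntegrable _ _) (hf_cont.intervalIntegrable _ _) hpoint
  have step2 : ∫ θ in (-a)..a, f θ ≤ ∫ θ in (-π)..π, f θ := by
    apply intervalIntegral.integral_mono_interval (by linarith) (by linarith) haπ
    · filter_upwards with x
      positivity
    · exact hf_cont.intervalIntegrable _ _
  have hsplit : ((m:ℝ) + 1) ^ (2 * t) = ((m:ℝ) + 1) ^ (2 * t - 1) * ((m:ℝ) + 1) := by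
    rw [← pow_succ]
    congr 1
    omega
  have key : 16 / (9 * π) * (1 / s) ≤ ((m:ℝ) + 1) * (4 / 3 * a) := by
    have h1 : ((m:ℝ) + 1) * (4 / 3 * a) = 4 * ((m:ℝ) + 1) / (3 * ((m:ℝ) * s)) := by
      rw [ha_def]; ring
    have h2 : 16 / (9 * π) * (1 / s) = 16 / (9 * π * s) := by
      rw [div_mul_div_comm, mul_one]
    rw [h1, h2, div_le_div_iff₀ (by positivity) (by positivity)]
    nlinarith [mul_nonneg hs0.le (mul_nonneg (by linarith : (0:ℝ) ≤ π - 3) hm0.le),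
      mul_nonneg hs0.le (by linarith : (0:ℝ) ≤ π - 3)]
  have final : 16 / (9 * π) * (1 / s) * ((m:ℝ) + 1) ^ (2 * t - 1) ≤
      ((m:ℝ) + 1) ^ (2 * t) * (4 / 3 * a) := by
    rw [hsplit]
    calc 16 / (9 * π) * (1 / s) * ((m:ℝ) + 1) ^ (2 * t - 1)
        = ((m:ℝ) + 1) ^ (2 * t - 1) * (16 / (9 * π) * (1 / s)) := by ring
      _ ≤ ((m:ℝ) + 1) ^ (2 * t - 1) * (((m:ℝ) + 1) * (4 / 3 * a)) :=
          mul_le_mul_of_nonneg_left key (by positivity)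
      _ = ((m:ℝ) + 1) ^ (2 * t - 1) * ((m:ℝ) + 1) * (4 / 3 * a) := by ring
  calc 16 / (9 * π) * (1 / Real.sqrt t) * ((m:ℝ) + 1) ^ (2 * t - 1)
      ≤ ((m:ℝ) + 1) ^ (2 * t) * (4 / 3 * a) := final
    _ = ∫ θ in (-a)..a, g θ := hgint.symm
    _ ≤ ∫ θ in (-a)..a, f θ := step1
    _ ≤ ∫ θ in (-π)..π, f θ := step2
end

section
/- For every integer m ≥ 0, (1/2π) ∫_{−π}^{π} θ² · |∑_{k=0}^{m} e^{ikθ}|⁴ dθ ≤ ((2 + 3π⁴)/(3π)) · (m+1). -/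
open scoped Real

-- kernel bound
lemma absS_le_pi_div (m : ℕ) {θ : ℝ} (h0 : θ ≠ 0) (hπ : |θ| ≤ π) :
    ‖∑ k ∈ Finset.range (m + 1), Complex.exp (Complex.I * k * θ)‖ ≤ π / |θ| := by
  set z : ℂ := Complex.exp (θ * Complex.I) with hzdef
  have hz : ∀ k : ℕ, Complex.exp (Complex.I * k * θ) = z ^ k := by
    intro k
    rw [hzdef, ← Complex.exp_nat_mul]
    ring_nf
  have hz1 : z ≠ 1 := by
    intro h
    rw [Complex.exp_eq_one_iff] at h
    obtain ⟨n, hn⟩ := h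
    have hc : (θ : ℂ) * Complex.I = ((2 * π * n : ℝ) : ℂ) * Complex.I := by
      push_cast
      linear_combination hn
    have hc2 : (θ : ℂ) = ((2 * π * n : ℝ) : ℂ) := mul_right_cancel₀ Complex.I_ne_zero hc
    have hr : θ = 2 * π * n := by exact_mod_cast hc2
    rcases eq_or_ne n 0 with rfl | hn0
    · simp at hr; exact h0 (by simpa using hr)
    · have : (1:ℝ) ≤ |(n:ℝ)| := by
        have := Int.one_le_abs hn0
        exact_mod_cast this
      have habs : |θ| = 2 * π * |(n:ℝ)| := by
        rw [hr, abs_mul, abs_of_nonneg (by positivity : (0:ℝ) ≤ 2*π)]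
      nlinarith [Real.pi_pos]
  have hlow : 2 * |θ| / π ≤ ‖z - 1‖ := by
    have hsq : ‖z - 1‖ ^ 2 = 2 - 2 * Real.cos θ := by
      rw [Complex.sq_norm, hzdef, Complex.exp_mul_I, Complex.normSq_apply]
      simp [Complex.cos_ofReal_re, Complex.sin_ofReal_re]
      nlinarith [Real.sin_sq_add_cos_sq θ]
    have hcos := Real.cos_le_one_sub_mul_cos_sq hπ
    have hA : 0 ≤ ‖z - 1‖ := norm_nonneg _
    have hπ0 := Real.pi_pos
    apply le_of_pow_le_pow_left₀ (two_ne_zero) hA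
    have h4 : (2 * |θ| / π) ^ 2 = 4 * (θ^2 / π^2) := by
      rw [div_pow, mul_pow, sq_abs]; ring
    rw [h4, hsq]
    have : 2 / π ^ 2 * θ ^ 2 = 2 * (θ^2 / π^2) := by ring
    rw [this] at hcos
    linarith
  have hsum : (∑ k ∈ Finset.range (m + 1), Complex.exp (Complex.I * k * θ))
      = (z ^ (m+1) - 1) / (z - 1) := by
    simp_rw [hz]
    exact geom_sum_eq hz1 (m+1)
  rw [hsum, norm_div]
  have hnum : ‖z ^ (m+1) - 1‖ ≤ 2 := by
    calc ‖z ^ (m+1) - 1‖ ≤ ‖z ^ (m+1)‖ + ‖(1:ℂ)‖ := by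
          simpa [sub_eq_add_neg] using norm_add_le (z ^ (m+1)) (-1)
    _ ≤ 2 := by
        rw [norm_pow, hzdef, Complex.norm_exp_ofReal_mul_I]
        norm_num
  have hθ0 : 0 < |θ| := abs_pos.mpr h0
  have hπ0 := Real.pi_pos
  have hd : 0 < 2 * |θ| / π := by positivity
  calc ‖z ^ (m+1) - 1‖ / ‖z - 1‖
      ≤ 2 / (2 * |θ| / π) :=
        div_le_div₀ (by norm_num) hnum hd hlow
  _ = π / |θ| := by field_simp

lemma absS_le_card (m : ℕ) (θ : ℝ) :
    ‖∑ k ∈ Finset.range (m + 1), Complex.exp (Complex.I * k * θ)‖ ≤ (m + 1 : ℝ) := by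
  have h1 : ∀ k : ℕ, ‖Complex.exp (Complex.I * k * θ)‖ = 1 := by
    intro k
    rw [Complex.norm_exp]
    simp
  calc ‖∑ k ∈ Finset.range (m + 1), Complex.exp (Complex.I * k * θ)‖
      ≤ ∑ k ∈ Finset.range (m + 1), ‖Complex.exp (Complex.I * k * θ)‖ :=
        norm_sum_le _ _
    _ = (m + 1 : ℝ) := by simp [h1]

lemma contf (m : ℕ) : Continuous (fun θ : ℝ =>
    θ ^ 2 * (‖∑ k ∈ Finset.range (m + 1), Complex.exp (Complex.I * k * θ)‖) ^ 4) := by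
  apply Continuous.mul (by fun_prop)
  apply Continuous.pow
  apply continuous_norm.comp
  exact continuous_finset_sum _ fun k _ => Complex.continuous_exp.comp (by fun_prop)

lemma pointwise_tail (m : ℕ) {θ : ℝ} (h0 : θ ≠ 0) (hπ : |θ| ≤ π) :
    θ ^ 2 * (‖∑ k ∈ Finset.range (m + 1), Complex.exp (Complex.I * k * θ)‖) ^ 4
      ≤ π ^ 4 * θ ^ (-2 : ℤ) := by
  have hθ0 : 0 < |θ| := abs_pos.mpr h0
  have hπ0 := Real.pi_pos
  have h1 := absS_le_pi_div m h0 hπ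
  have h2 : (‖∑ k ∈ Finset.range (m + 1), Complex.exp (Complex.I * k * θ)‖) ^ 4
      ≤ (π / |θ|) ^ 4 := pow_le_pow_left₀ (norm_nonneg _) h1 4
  calc θ ^ 2 * (‖∑ k ∈ Finset.range (m + 1), Complex.exp (Complex.I * k * θ)‖) ^ 4
      ≤ θ ^ 2 * (π / |θ|) ^ 4 := mul_le_mul_of_nonneg_left h2 (sq_nonneg θ)
    _ = π ^ 4 * θ ^ (-2 : ℤ) := by
        have habs : |θ| ^ 4 = θ ^ 4 := by rw [← abs_pow, abs_of_nonneg (by positivity)]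
        rw [div_pow, habs]
        rw [show ((-2 : ℤ) = -(2:ℕ)) by norm_num, zpow_neg, zpow_natCast]
        field_simp

theorem stmt9 (m : ℕ) :
    (1 / (2 * π)) *
        ∫ θ in (-π)..π,
          θ ^ 2 * ‖∑ k ∈ Finset.range (m + 1), Complex.exp (Complex.I * k * θ)‖ ^ 4 ≤
      (2 + 3 * π ^ 4) / (3 * π) * (m + 1 : ℝ) := by
  have hπ0 := Real.pi_pos
  have hπ3 := Real.pi_gt_three
  set f : ℝ → ℝ := fun θ =>
    θ ^ 2 * (‖∑ k ∈ Finset.range (m + 1), Complex.exp (Complex.I * k * θ)‖) ^ 4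
    with hf_def
  have hm1 : (0:ℝ) < m + 1 := by positivity
  set a : ℝ := 1 / (m + 1) with ha_def
  have ha0 : 0 < a := by positivity
  have ha1 : a ≤ 1 := by
    rw [ha_def, div_le_one hm1]
    have : (0:ℝ) ≤ m := Nat.cast_nonneg m
    linarith
  have haπ : a < π := lt_of_le_of_lt ha1 (by linarith)
  have hfc : Continuous f := contf m
  have hint : ∀ u v : ℝ, IntervalIntegrable f MeasureTheory.volume u v :=
    fun u v => hfc.intervalIntegrable u v
  have hsplit : (∫ θ in (-π)..π, f θ) =
      (∫ θ in (-π)..(-a), f θ) + (∫ θ in (-a)..a, f θ) + (∫ θ in a..π, f θ) := by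
    rw [intervalIntegral.integral_add_adjacent_intervals (hint _ _) (hint _ _),
      intervalIntegral.integral_add_adjacent_intervals (hint _ _) (hint _ _)]
  -- middle part
  have hmid : (∫ θ in (-a)..a, f θ) ≤ 2 * (m + 1) / 3 := by
    have hb : ∀ θ ∈ Set.Icc (-a) a, f θ ≤ (m + 1 : ℝ) ^ 4 * θ ^ 2 := by
      intro θ _
      have h2 : (‖∑ k ∈ Finset.range (m + 1), Complex.exp (Complex.I * k * θ)‖) ^ 4
          ≤ (m + 1 : ℝ) ^ 4 := pow_le_pow_left₀ (norm_nonneg _) (absS_le_card m θ) 4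
      calc f θ ≤ θ ^ 2 * (m + 1 : ℝ) ^ 4 := mul_le_mul_of_nonneg_left h2 (sq_nonneg θ)
        _ = (m + 1 : ℝ) ^ 4 * θ ^ 2 := by ring
    calc (∫ θ in (-a)..a, f θ) ≤ ∫ θ in (-a)..a, (m + 1 : ℝ) ^ 4 * θ ^ 2 := by
          apply intervalIntegral.integral_mono_on (by linarith) (hint _ _)
            ((continuous_const.mul (continuous_pow 2)).intervalIntegrable _ _) hb
      _ = 2 * (m + 1) / 3 := by
          rw [intervalIntegral.integral_const_mul, integral_pow]
          rw [ha_def]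
          field_simp
          ring_nf
          field_simp
          ring
  -- tail parts
  have h0uIcc : ∀ u v : ℝ, 0 < u → u ≤ v → (0:ℝ) ∉ Set.uIcc u v := by
    intro u v hu huv
    rw [Set.uIcc_of_le huv]
    intro h
    exact absurd h.1 (by linarith)
  have hizpow : ∀ u v : ℝ, (0:ℝ) ∉ Set.uIcc u v →
      IntervalIntegrable (fun θ : ℝ => π ^ 4 * θ ^ (-2 : ℤ)) MeasureTheory.volume u v := by
    intro u v h
    exact (intervalIntegral.intervalIntegrable_zpow (Or.inr h)).const_mul _
  have hright : (∫ θ in a..π, f θ) ≤ π ^ 4 * (m + 1) := by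
    have h0m : (0:ℝ) ∉ Set.uIcc a π := h0uIcc a π ha0 haπ.le
    have hb : ∀ θ ∈ Set.Icc a π, f θ ≤ π ^ 4 * θ ^ (-2 : ℤ) := by
      intro θ hθ
      have hθ0 : 0 < θ := lt_of_lt_of_le ha0 hθ.1
      exact pointwise_tail m hθ0.ne' (by rw [abs_of_pos hθ0]; exact hθ.2)
    calc (∫ θ in a..π, f θ) ≤ ∫ θ in a..π, π ^ 4 * θ ^ (-2 : ℤ) := by
          apply intervalIntegral.integral_mono_on haπ.le (hint _ _) (hizpow _ _ h0m) hb
      _ = π ^ 4 * (a⁻¹ - π⁻¹) := by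
          rw [intervalIntegral.integral_const_mul, integral_zpow (Or.inr ⟨by norm_num, h0m⟩)]
          norm_num
          ring
      _ ≤ π ^ 4 * (m + 1) := by
          have : a⁻¹ = (m + 1 : ℝ) := by rw [ha_def]; field_simp
          rw [this]
          have hπinv : 0 < π⁻¹ := by positivity
          have h4 : (0:ℝ) ≤ π ^ 4 := by positivity
          nlinarith [mul_nonneg h4 hπinv.le]
  have hleft : (∫ θ in (-π)..(-a), f θ) ≤ π ^ 4 * (m + 1) := by
    have h0m : (0:ℝ) ∉ Set.uIcc (-π) (-a) := by
      rw [Set.uIcc_of_le (by linarith)]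
      intro h
      exact absurd h.2 (by simp; linarith)
    have hb : ∀ θ ∈ Set.Icc (-π) (-a), f θ ≤ π ^ 4 * θ ^ (-2 : ℤ) := by
      intro θ hθ
      have hθ0 : θ < 0 := lt_of_le_of_lt hθ.2 (by linarith)
      exact pointwise_tail m hθ0.ne (by rw [abs_of_neg hθ0]; linarith [hθ.1])
    calc (∫ θ in (-π)..(-a), f θ) ≤ ∫ θ in (-π)..(-a), π ^ 4 * θ ^ (-2 : ℤ) := by
          apply intervalIntegral.integral_mono_on (by linarith) (hint _ _) (hizpow _ _ h0m) hb
      _ = π ^ 4 * (a⁻¹ - π⁻¹) := by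
          rw [intervalIntegral.integral_const_mul, integral_zpow (Or.inr ⟨by norm_num, h0m⟩)]
          norm_num
          ring
      _ ≤ π ^ 4 * (m + 1) := by
          have : a⁻¹ = (m + 1 : ℝ) := by rw [ha_def]; field_simp
          rw [this]
          have hπinv : 0 < π⁻¹ := by positivity
          have h4 : (0:ℝ) ≤ π ^ 4 := by positivity
          nlinarith [mul_nonneg h4 hπinv.le]
  have htot : (∫ θ in (-π)..π, f θ) ≤ (2/3 + 2 * π ^ 4) * (m + 1) := by
    rw [hsplit]
    nlinarith
  have h2π : (0:ℝ) < 1 / (2 * π) := by positivity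
  calc (1 / (2 * π)) * ∫ θ in (-π)..π, f θ
      ≤ (1 / (2 * π)) * ((2/3 + 2 * π ^ 4) * (m + 1)) := by
        exact mul_le_mul_of_nonneg_left htot h2π.le
    _ ≤ (2 + 3 * π ^ 4) / (3 * π) * (m + 1 : ℝ) := by
        rw [div_mul_eq_mul_div, div_mul_eq_mul_div, div_le_div_iff₀ (by positivity) (by positivity)]
        nlinarith [hm1, sq_nonneg π]
end

section
/- Let a : ℤ → ℂ be absolutely summable. Then for every n ≥ 1, ‖T_n(a)‖ ≤ ‖a‖∞. -/
open scoped Real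

namespace ToeplitzAux

open Complex MeasureTheory

lemma norm_exp_I (k : ℤ) (θ : ℝ) : ‖Complex.exp (Complex.I * k * θ)‖ = 1 := by
  rw [show Complex.I * k * θ = ((k * θ : ℝ) : ℂ) * Complex.I by push_cast; ring]
  exact Complex.norm_exp_ofReal_mul_I _

lemma norm_term (a : ℤ → ℂ) (k : ℤ) (θ : ℝ) :
    ‖a k * Complex.exp (Complex.I * k * θ)‖ = ‖a k‖ := by
  rw [norm_mul, norm_exp_I, mul_one]

lemma symbol_bound (a : ℤ → ℂ) (ha : Summable fun k : ℤ => ‖a k‖) (θ : ℝ) :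
    ‖symbol a θ‖ ≤ ∑' k : ℤ, ‖a k‖ := by
  have h := norm_tsum_le_tsum_norm (f := fun k : ℤ => a k * Complex.exp (Complex.I * k * θ))
    (by simpa only [norm_term] using ha)
  simp only [norm_term] at h
  exact h

lemma orth (m : ℤ) : (∫ θ : ℝ in (-π)..π, Complex.exp (Complex.I * m * θ))
    = if m = 0 then (2*π : ℂ) else 0 := by
  rcases eq_or_ne m 0 with h | h
  · simp [h]; ring
  · rw [if_neg h]
    have hc : (Complex.I * m) ≠ 0 := by simp [Complex.I_ne_zero, h]
    have h2 := integral_exp_mul_complex (a := (-π)) (b := π) hc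
    simp_rw [mul_assoc] at h2 ⊢
    rw [h2]
    have : Complex.exp (Complex.I * (m * π)) = Complex.exp (Complex.I * (m * (-π:ℝ))) := by
      rw [show Complex.I * (m * ((π:ℝ):ℂ)) = Complex.I * (m * ((-π:ℝ):ℂ)) + m * (2 * π * Complex.I)
          by push_cast; ring,
        Complex.exp_add, Complex.exp_int_mul_two_pi_mul_I, mul_one]
    rw [this, sub_self, zero_div]

lemma cont_cexp (m : ℤ) (c : ℂ) :
    Continuous fun θ : ℝ => c * Complex.exp (Complex.I * m * θ) := by fun_prop

lemma int_finsum {ι : Type*} (s : Finset ι) (c : ι → ℂ) (e : ι → ℤ) :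
    (∫ θ : ℝ in (-π)..π, ∑ i ∈ s, c i * Complex.exp (Complex.I * (e i) * θ))
      = ∑ i ∈ s, c i * (if e i = 0 then (2*π : ℂ) else 0) := by
  rw [intervalIntegral.integral_finset_sum
    (fun i _ => (cont_cexp (e i) (c i)).intervalIntegrable _ _)]
  refine Finset.sum_congr rfl fun i _ => ?_
  rw [intervalIntegral.integral_const_mul, orth]

variable {n : ℕ}

noncomputable def gfun (y : Fin n → ℂ) (θ : ℝ) : ℂ :=
  ∑ k : Fin n, y k * Complex.exp (Complex.I * (k : ℤ) * θ)

lemma gfun_cont (y : Fin n → ℂ) : Continuous (gfun y) := by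
  unfold gfun; fun_prop

lemma conj_gfun (y : Fin n → ℂ) (θ : ℝ) :
    (starRingEnd ℂ) (gfun y θ) = ∑ k : Fin n, (starRingEnd ℂ) (y k) *
      Complex.exp (Complex.I * ((-(k : ℤ) : ℤ) : ℂ) * θ) := by
  unfold gfun
  rw [map_sum]
  refine Finset.sum_congr rfl fun k _ => ?_
  rw [map_mul, ← Complex.exp_conj]
  congr 1
  simp [Complex.conj_ofReal]

lemma P_expand (x y : Fin n → ℂ) (θ : ℝ) :
    (starRingEnd ℂ) (gfun x θ) * gfun y θ
      = ∑ p : Fin n × Fin n, ((starRingEnd ℂ) (x p.1) * y p.2) *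
          Complex.exp (Complex.I * ((((p.2 : ℤ) - (p.1 : ℤ)) : ℤ) : ℂ) * θ) := by
  rw [conj_gfun]
  unfold gfun
  rw [Finset.sum_mul_sum, ← Finset.sum_product']
  refine Finset.sum_congr rfl fun p _ => ?_
  rw [mul_mul_mul_comm, ← Complex.exp_add]
  congr 2
  push_cast
  ring

lemma parseval (y : Fin n → ℂ) :
    (∫ θ : ℝ in (-π)..π, ‖gfun y θ‖^2) = 2*π * ∑ k : Fin n, ‖y k‖^2 := by
  have hptc : ∀ θ : ℝ, ((‖gfun y θ‖^2 : ℝ) : ℂ) = (starRingEnd ℂ) (gfun y θ) * gfun y θ := by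
    intro θ
    rw [← Complex.normSq_eq_conj_mul_self, Complex.normSq_eq_norm_sq]
  have h1 : (∫ θ : ℝ in (-π)..π, ((‖gfun y θ‖^2 : ℝ) : ℂ))
      = ((∫ θ : ℝ in (-π)..π, ‖gfun y θ‖^2 : ℝ) : ℂ) := intervalIntegral.integral_ofReal
  have h2 : (∫ θ : ℝ in (-π)..π, ((‖gfun y θ‖^2 : ℝ) : ℂ))
      = 2*π * ∑ k : Fin n, (‖y k‖^2 : ℝ) := by
    simp_rw [hptc, P_expand]
    rw [int_finsum (Finset.univ) (fun p : Fin n × Fin n => (starRingEnd ℂ) (y p.1) * y p.2)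
      (fun p => (p.2 : ℤ) - (p.1 : ℤ))]
    rw [Fintype.sum_prod_type, Finset.sum_comm]
    have key : ∀ k : Fin n, ∑ j : Fin n, ((starRingEnd ℂ) (y j) * y k) *
        (if ((k:ℤ) - (j:ℤ) = 0) then (2*π:ℂ) else 0)
        = 2*π * (‖y k‖^2 : ℝ) := by
      intro k
      rw [Finset.sum_eq_single k]
      · rw [if_pos (by ring), ← Complex.normSq_eq_conj_mul_self]
        rw [Complex.normSq_eq_norm_sq]
        norm_cast
        ring
      · intro j _ hj
        rw [if_neg, mul_zero]
        intro h
        exact hj (Fin.ext (by exact_mod_cast (show (j:ℤ) = (k:ℤ) by omega)))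
      · intro h; exact absurd (Finset.mem_univ k) h
    rw [Finset.sum_congr rfl (fun k _ => key k), ← Finset.mul_sum]
    push_cast
    ring
  rw [h1] at h2
  exact_mod_cast h2

lemma hpt2 (a : ℤ → ℂ) (x y : Fin n → ℂ) (m : ℤ) (θ : ℝ) :
    (a m * Complex.exp (Complex.I * m * θ)) * ((starRingEnd ℂ) (gfun x θ) * gfun y θ)
      = ∑ p : Fin n × Fin n,
        (a m * ((starRingEnd ℂ) (x p.1) * y p.2)) *
          Complex.exp (Complex.I * (((m - (p.1 : ℤ) + (p.2 : ℤ)) : ℤ) : ℂ) * θ) := by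
  rw [P_expand, Finset.mul_sum]
  refine Finset.sum_congr rfl fun p _ => ?_
  rw [mul_mul_mul_comm, ← Complex.exp_add]
  congr 2
  push_cast
  ring

lemma int_Fm (a : ℤ → ℂ) (x y : Fin n → ℂ) (m : ℤ) :
    (∫ θ : ℝ in (-π)..π,
        (a m * Complex.exp (Complex.I * m * θ)) * ((starRingEnd ℂ) (gfun x θ) * gfun y θ))
      = ∑ p : Fin n × Fin n, (a m * ((starRingEnd ℂ) (x p.1) * y p.2)) *
          (if m - (p.1 : ℤ) + (p.2 : ℤ) = 0 then (2*π : ℂ) else 0) := by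
  simp_rw [hpt2 a x y m]
  exact int_finsum Finset.univ
    (fun p : Fin n × Fin n => a m * ((starRingEnd ℂ) (x p.1) * y p.2))
    (fun p => m - (p.1 : ℤ) + (p.2 : ℤ))

lemma stepA (a : ℤ → ℂ) (ha : Summable fun k : ℤ => ‖a k‖) (x y : Fin n → ℂ) :
    (∫ θ : ℝ in (-π)..π, (∑' m : ℤ, a m * Complex.exp (Complex.I * m * θ)) *
        ((starRingEnd ℂ) (gfun x θ) * gfun y θ))
      = 2*π * ∑ p : Fin n × Fin n,
          (starRingEnd ℂ) (x p.1) * a ((p.1 : ℤ) - (p.2 : ℤ)) * y p.2 := by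
  have hle : (-π : ℝ) ≤ π := by linarith [Real.pi_pos]
  have hPc : Continuous fun θ => (starRingEnd ℂ) (gfun x θ) * gfun y θ :=
    (Complex.continuous_conj.comp (gfun_cont x)).mul (gfun_cont y)
  have hFc : ∀ m : ℤ, Continuous fun θ : ℝ =>
      (a m * Complex.exp (Complex.I * m * θ)) * ((starRingEnd ℂ) (gfun x θ) * gfun y θ) := by
    intro m
    apply Continuous.mul _ hPc
    fun_prop
  have hint : ∀ m : ℤ, Integrable (fun θ : ℝ =>
      (a m * Complex.exp (Complex.I * m * θ)) * ((starRingEnd ℂ) (gfun x θ) * gfun y θ))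
      (volume.restrict (Set.Ioc (-π) π)) := fun m => (hFc m).integrableOn_Ioc
  have hsum : Summable fun m : ℤ => ∫ θ in Set.Ioc (-π) π,
      ‖(a m * Complex.exp (Complex.I * m * θ)) * ((starRingEnd ℂ) (gfun x θ) * gfun y θ)‖ := by
    apply Summable.congr
      (ha.mul_right (∫ θ in Set.Ioc (-π) π, ‖(starRingEnd ℂ) (gfun x θ) * gfun y θ‖))
    intro m
    simp_rw [norm_mul (a m * Complex.exp (Complex.I * m * _)), norm_term]
    rw [MeasureTheory.integral_const_mul]
  have swap := MeasureTheory.integral_tsum_of_summable_integral_norm hint hsum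
  calc (∫ θ : ℝ in (-π)..π, (∑' m : ℤ, a m * Complex.exp (Complex.I * m * θ)) *
        ((starRingEnd ℂ) (gfun x θ) * gfun y θ))
      = ∫ θ in Set.Ioc (-π) π, ∑' m : ℤ,
          (a m * Complex.exp (Complex.I * m * θ)) * ((starRingEnd ℂ) (gfun x θ) * gfun y θ) := by
        rw [intervalIntegral.integral_of_le hle]
        exact integral_congr_ae (Filter.Eventually.of_forall fun θ => (tsum_mul_right).symm)
    _ = ∑' m : ℤ, ∫ θ in Set.Ioc (-π) π,
          (a m * Complex.exp (Complex.I * m * θ)) * ((starRingEnd ℂ) (gfun x θ) * gfun y θ) :=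
        swap.symm
    _ = ∑' m : ℤ, ∑ p : Fin n × Fin n, (a m * ((starRingEnd ℂ) (x p.1) * y p.2)) *
          (if m - (p.1 : ℤ) + (p.2 : ℤ) = 0 then (2*π : ℂ) else 0) := by
        refine tsum_congr fun m => ?_
        rw [← intervalIntegral.integral_of_le hle]
        exact int_Fm a x y m
    _ = ∑ p : Fin n × Fin n, ∑' m : ℤ, (a m * ((starRingEnd ℂ) (x p.1) * y p.2)) *
          (if m - (p.1 : ℤ) + (p.2 : ℤ) = 0 then (2*π : ℂ) else 0) := by
        refine Summable.tsum_finsetSum fun p _ => ?_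
        apply summable_of_ne_finset_zero (s := {(p.1 : ℤ) - (p.2 : ℤ)})
        intro m hm
        rw [if_neg, mul_zero]
        simp only [Finset.mem_singleton] at hm
        omega
    _ = ∑ p : Fin n × Fin n,
          2*π * ((starRingEnd ℂ) (x p.1) * a ((p.1 : ℤ) - (p.2 : ℤ)) * y p.2) := by
        refine Finset.sum_congr rfl fun p _ => ?_
        rw [tsum_eq_single ((p.1 : ℤ) - (p.2 : ℤ))]
        · rw [if_pos (by ring)]
          ring
        · intro m hm
          rw [if_neg, mul_zero]
          omega
    _ = 2*π * ∑ p : Fin n × Fin n,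
          (starRingEnd ℂ) (x p.1) * a ((p.1 : ℤ) - (p.2 : ℤ)) * y p.2 := by
        rw [Finset.mul_sum]

lemma conj22 : Real.HolderConjugate 2 2 := ⟨by norm_num, by norm_num, by norm_num⟩

lemma gfun_mem (x : Fin n → ℂ) :
    MemLp (fun θ : ℝ => ‖gfun x θ‖) (ENNReal.ofReal 2)
      (volume.restrict (Set.Ioc (-π) π)) := by
  apply MemLp.of_bound ((gfun_cont x).norm.aestronglyMeasurable) (∑ k : Fin n, ‖x k‖)
  refine Filter.Eventually.of_forall fun θ => ?_
  rw [Real.norm_of_nonneg (norm_nonneg _)]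
  refine (norm_sum_le _ _).trans ?_
  refine le_of_eq (Finset.sum_congr rfl fun k _ => ?_)
  rw [norm_mul, norm_exp_I, mul_one]

lemma cs (x y : Fin n → ℂ) :
    (∫ θ in Set.Ioc (-π) π, ‖gfun x θ‖ * ‖gfun y θ‖)
      ≤ Real.sqrt (∫ θ in Set.Ioc (-π) π, ‖gfun x θ‖^2) *
        Real.sqrt (∫ θ in Set.Ioc (-π) π, ‖gfun y θ‖^2) := by
  have h := integral_mul_le_Lp_mul_Lq_of_nonneg conj22
    (Filter.Eventually.of_forall fun θ => norm_nonneg (gfun x θ))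
    (Filter.Eventually.of_forall fun θ => norm_nonneg (gfun y θ))
    (gfun_mem x) (gfun_mem y)
  refine h.trans (le_of_eq ?_)
  have h2 : ∀ r : ℝ, r ^ (2:ℝ) = r ^ 2 := fun r => by
    rw [show (2:ℝ) = ((2:ℕ):ℝ) by norm_num, Real.rpow_natCast]
  simp_rw [h2, ← Real.sqrt_eq_rpow] at h ⊢

lemma symbol_continuous (a : ℤ → ℂ) (ha : Summable fun k : ℤ => ‖a k‖) :
    Continuous (symbol a) := by
  apply continuous_tsum (fun k => by fun_prop) ha
  intro k θ
  exact le_of_eq (norm_term a k θ)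

lemma bddAbove_symbol (a : ℤ → ℂ) (ha : Summable fun k : ℤ => ‖a k‖) :
    BddAbove ((fun θ => ‖symbol a θ‖) '' Set.Icc (-π) π) := by
  refine ⟨∑' k : ℤ, ‖a k‖, ?_⟩
  rintro r ⟨θ, -, rfl⟩
  exact symbol_bound a ha θ

lemma le_symbolSup (a : ℤ → ℂ) (ha : Summable fun k : ℤ => ‖a k‖)
    {θ : ℝ} (hθ : θ ∈ Set.Icc (-π) π) :
    ‖symbol a θ‖ ≤ symbolSup a :=
  le_csSup (bddAbove_symbol a ha) ⟨θ, hθ, rfl⟩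

lemma symbolSup_nonneg (a : ℤ → ℂ) (ha : Summable fun k : ℤ => ‖a k‖) :
    0 ≤ symbolSup a :=
  le_trans (norm_nonneg _)
    (le_symbolSup a ha ⟨by linarith [Real.pi_pos], Real.pi_pos.le⟩ (θ := 0))

lemma key (a : ℤ → ℂ) (ha : Summable fun k : ℤ => ‖a k‖) (x y : Fin n → ℂ) :
    ‖∑ p : Fin n × Fin n,
        (starRingEnd ℂ) (x p.1) * a ((p.1 : ℤ) - (p.2 : ℤ)) * y p.2‖
      ≤ symbolSup a *
        (Real.sqrt (∑ j : Fin n, ‖x j‖^2) * Real.sqrt (∑ k : Fin n, ‖y k‖^2)) := by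
  have hle : (-π : ℝ) ≤ π := by linarith [Real.pi_pos]
  have h2π : (0:ℝ) < 2*π := by linarith [Real.pi_pos]
  have hgx := gfun_cont x
  have hgy := gfun_cont y
  have hsc := symbol_continuous a ha
  have habs : ∀ θ : ℝ, ‖symbol a θ * ((starRingEnd ℂ) (gfun x θ) * gfun y θ)‖
      = ‖symbol a θ‖ * (‖gfun x θ‖ * ‖gfun y θ‖) := by
    intro θ
    rw [norm_mul, norm_mul, RCLike.norm_conj]
  have hchain : 2*π * ‖∑ p : Fin n × Fin n,
      (starRingEnd ℂ) (x p.1) * a ((p.1 : ℤ) - (p.2 : ℤ)) * y p.2‖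
      ≤ 2*π * (symbolSup a *
        (Real.sqrt (∑ j : Fin n, ‖x j‖^2) * Real.sqrt (∑ k : Fin n, ‖y k‖^2))) := by
    calc 2*π * ‖∑ p : Fin n × Fin n,
          (starRingEnd ℂ) (x p.1) * a ((p.1 : ℤ) - (p.2 : ℤ)) * y p.2‖
        = ‖2*π * ∑ p : Fin n × Fin n,
            (starRingEnd ℂ) (x p.1) * a ((p.1 : ℤ) - (p.2 : ℤ)) * y p.2‖ := by
          have h1 : ‖2 * (π:ℂ)‖ = 2*π := by
            rw [show (2:ℂ) * (π:ℂ) = ((2*π : ℝ) : ℂ) by push_cast; ring, Complex.norm_real,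
              Real.norm_of_nonneg h2π.le]
          rw [norm_mul, h1]
        _ = ‖∫ θ : ℝ in (-π)..π, symbol a θ * ((starRingEnd ℂ) (gfun x θ) * gfun y θ)‖ := by
          rw [← stepA a ha x y]
          rfl
        _ = ‖∫ θ in Set.Ioc (-π) π, symbol a θ * ((starRingEnd ℂ) (gfun x θ) * gfun y θ)‖ := by
          rw [intervalIntegral.integral_of_le hle]
        _ ≤ ∫ θ in Set.Ioc (-π) π, ‖symbol a θ * ((starRingEnd ℂ) (gfun x θ) * gfun y θ)‖ :=
          norm_integral_le_integral_norm _
        _ ≤ ∫ θ in Set.Ioc (-π) π, symbolSup a * (‖gfun x θ‖ * ‖gfun y θ‖) := by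
          apply integral_mono_ae
          · exact ((hsc.mul ((Complex.continuous_conj.comp hgx).mul hgy)).norm).integrableOn_Ioc
          · exact (continuous_const.mul (hgx.norm.mul hgy.norm)).integrableOn_Ioc
          filter_upwards [ae_restrict_mem measurableSet_Ioc] with θ hθ
          rw [habs θ]
          exact mul_le_mul_of_nonneg_right
            (le_symbolSup a ha ⟨hθ.1.le, hθ.2⟩)
            (mul_nonneg (norm_nonneg _) (norm_nonneg _))
        _ = symbolSup a * ∫ θ in Set.Ioc (-π) π, ‖gfun x θ‖ * ‖gfun y θ‖ :=
          MeasureTheory.integral_const_mul _ _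
        _ ≤ symbolSup a * (Real.sqrt (∫ θ in Set.Ioc (-π) π, ‖gfun x θ‖^2) *
            Real.sqrt (∫ θ in Set.Ioc (-π) π, ‖gfun y θ‖^2)) :=
          mul_le_mul_of_nonneg_left (cs x y) (symbolSup_nonneg a ha)
        _ = 2*π * (symbolSup a *
            (Real.sqrt (∑ j : Fin n, ‖x j‖^2) * Real.sqrt (∑ k : Fin n, ‖y k‖^2))) := by
          rw [← intervalIntegral.integral_of_le hle, ← intervalIntegral.integral_of_le hle,
            parseval x, parseval y,
            Real.sqrt_mul h2π.le, Real.sqrt_mul h2π.le,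
            show Real.sqrt (2*π) * Real.sqrt (∑ j : Fin n, ‖x j‖^2) *
              (Real.sqrt (2*π) * Real.sqrt (∑ k : Fin n, ‖y k‖^2))
              = (Real.sqrt (2*π) * Real.sqrt (2*π)) *
                (Real.sqrt (∑ j : Fin n, ‖x j‖^2) * Real.sqrt (∑ k : Fin n, ‖y k‖^2)) by ring,
            Real.mul_self_sqrt h2π.le]
          ring
  exact le_of_mul_le_mul_left hchain h2π

end ToeplitzAux

theorem stmt10 (a : ℤ → ℂ) (ha : Summable fun k : ℤ => ‖a k‖) :
    ∀ n : ℕ, 1 ≤ n → toeplitzNorm a n ≤ symbolSup a := by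
  intro n _
  apply ContinuousLinearMap.opNorm_le_bound _ (ToeplitzAux.symbolSup_nonneg a ha)
  intro y
  set T := Matrix.toEuclideanCLM (𝕜 := ℂ) (toeplitz a n) with hT
  set x : Fin n → ℂ := fun j => T y j with hx
  have hcoord : ∀ j : Fin n, x j = ∑ k : Fin n, a ((j : ℤ) - (k : ℤ)) * y k := by
    intro j
    rfl
  have hnx : ‖T y‖ = Real.sqrt (∑ j : Fin n, ‖x j‖^2) := by
    rw [EuclideanSpace.norm_eq]
  have hny : ‖y‖ = Real.sqrt (∑ k : Fin n, ‖y k‖^2) := by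
    rw [EuclideanSpace.norm_eq]
  have hS : (∑ p : Fin n × Fin n,
      (starRingEnd ℂ) (x p.1) * a ((p.1 : ℤ) - (p.2 : ℤ)) * y p.2)
      = ∑ j : Fin n, ((‖x j‖^2 : ℝ) : ℂ) := by
    rw [Fintype.sum_prod_type]
    refine Finset.sum_congr rfl fun j _ => ?_
    have : ∑ k : Fin n, (starRingEnd ℂ) (x j) * a ((j : ℤ) - (k : ℤ)) * y k
        = (starRingEnd ℂ) (x j) * ∑ k : Fin n, a ((j : ℤ) - (k : ℤ)) * y k := by
      rw [Finset.mul_sum]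
      exact Finset.sum_congr rfl fun k _ => by ring
    rw [this, ← hcoord j, ← Complex.normSq_eq_conj_mul_self, Complex.normSq_eq_norm_sq]
  have habsS : ‖∑ p : Fin n × Fin n,
      (starRingEnd ℂ) (x p.1) * a ((p.1 : ℤ) - (p.2 : ℤ)) * y p.2‖
      = ∑ j : Fin n, ‖x j‖^2 := by
    rw [hS]
    rw [show (∑ j : Fin n, ((‖x j‖^2 : ℝ) : ℂ)) = (((∑ j : Fin n, ‖x j‖^2 : ℝ)) : ℂ)
        by push_cast; ring,
      Complex.norm_real]
    exact Real.norm_of_nonneg (Finset.sum_nonneg fun j _ => sq_nonneg _)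
  have hkey := ToeplitzAux.key a ha x y
  rw [habsS] at hkey
  have hsq : ‖T y‖^2 ≤ symbolSup a * (‖T y‖ * ‖y‖) := by
    rw [hnx, hny, Real.sq_sqrt (Finset.sum_nonneg fun j _ => sq_nonneg _)]
    exact hkey
  rcases eq_or_lt_of_le (norm_nonneg (T y)) with h0 | h0
  · rw [← h0]
    exact mul_nonneg (ToeplitzAux.symbolSup_nonneg a ha) (norm_nonneg y)
  · nlinarith [hsq, norm_nonneg y]
end

section
/- Let a₀, a₁ ≥ 0 be real numbers and let n ≥ 1. Let T_n be the n×n lower bidiagonal Toeplitz matrix with diagonal entries a₀ and first subdiagonal entries a₁ (i.e., the Toeplitz matrix of the sequence a with a_0 = a₀, a_1 = a₁, and a_k = 0 otherwise). Then ‖T_n‖² ≤ a₀² + a₁² + 2·a₀·a₁·cos(π/(n+1)). -/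
open scoped Real

private lemma amgm (r x y : ℝ) (hr : 0 < r) :
    x * y ≤ r / (2 : ℝ) * x ^ 2 + 1 / (2 * r) * y ^ 2 := by
  rw [← sub_nonneg]
  have h : r / 2 * x ^ 2 + 1 / (2 * r) * y ^ 2 - x * y = (r * x - y) ^ 2 / (2 * r) := by
    field_simp; ring
  rw [h]; positivity

private lemma key (m : ℕ) (s : ℕ → ℝ) (hs : ∀ j, 0 ≤ s j) :
    ∑ j ∈ Finset.range m, s j * s (j + 1) ≤
      Real.cos (π / (m + 2)) * ∑ j ∈ Finset.range (m + 1), s j ^ 2 := by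
  set θ := π / (m + 2) with hθ
  have hm2 : (0:ℝ) < (m:ℝ) + 2 := by positivity
  have hθpos : 0 < θ := by positivity
  have hπ : ((m:ℝ) + 2) * θ = π := by rw [hθ]; field_simp
  set v : ℕ → ℝ := fun j => Real.sin (((j:ℝ) + 1) * θ) with hv
  have hvpos : ∀ j : ℕ, j < m + 1 → 0 < v j := by
    intro j hj
    apply Real.sin_pos_of_pos_of_lt_pi
    · positivity
    · rw [← hπ]
      apply mul_lt_mul_of_pos_right _ hθpos
      have : (j:ℝ) < (m:ℝ) + 1 := by exact_mod_cast hj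
      linarith
  have hvm : v (m + 1) = 0 := by
    have : ((m:ℝ) + 1 + 1) * θ = π := by rw [← hπ]; ring_nf
    simp [hv, this]
  set a : ℕ → ℝ := fun j => v (j + 1) / (2 * v j) * s j ^ 2 with ha
  set b : ℕ → ℝ := fun j => if j = 0 then 0 else v (j - 1) / (2 * v j) * s j ^ 2 with hb
  -- step 1: termwise AM-GM
  have step1 : ∑ j ∈ Finset.range m, s j * s (j + 1) ≤
      ∑ j ∈ Finset.range m, (a j + v j / (2 * v (j + 1)) * s (j + 1) ^ 2) := by
    apply Finset.sum_le_sum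
    intro j hj
    rw [Finset.mem_range] at hj
    have hvj : 0 < v j := hvpos j (by omega)
    have hvj1 : 0 < v (j + 1) := hvpos (j + 1) (by omega)
    have hr : 0 < v (j + 1) / v j := by positivity
    have := amgm (v (j + 1) / v j) (s j) (s (j + 1)) hr
    have e1 : v (j + 1) / v j / 2 = v (j + 1) / (2 * v j) := by ring
    have e2 : 1 / (2 * (v (j + 1) / v j)) = v j / (2 * v (j + 1)) := by
      field_simp
    rw [e1, e2] at this
    simpa [ha] using this
  -- step 2: the `a` sum extends to range (m+1) since a m = 0
  have step2 : ∑ j ∈ Finset.range m, a j = ∑ j ∈ Finset.range (m + 1), a j := by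
    rw [Finset.sum_range_succ]
    have : a m = 0 := by simp [ha, hvm]
    rw [this, add_zero]
  -- step 3: the second sum equals sum of b over range (m+1)
  have step3 : ∑ j ∈ Finset.range m, v j / (2 * v (j + 1)) * s (j + 1) ^ 2 =
      ∑ j ∈ Finset.range (m + 1), b j := by
    rw [Finset.sum_range_succ' b m]
    simp [hb]
  -- step 4: a j + b j = cos θ * s j ^ 2 for j < m + 1
  have step4 : ∀ j ∈ Finset.range (m + 1), a j + b j = Real.cos θ * s j ^ 2 := by
    intro j hj
    rw [Finset.mem_range] at hj
    have hvj : 0 < v j := hvpos j hj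
    match j with
    | 0 =>
      have h2 : v 1 = 2 * v 0 * Real.cos θ := by
        have : ((1:ℝ) + 1) * θ = 2 * θ := by ring
        simp only [hv, Nat.cast_one, Nat.cast_zero, this, zero_add, one_mul]
        rw [Real.sin_two_mul]
      simp only [ha, hb, if_pos rfl, add_zero, h2]
      have h0 : v 0 ≠ 0 := ne_of_gt hvj
      field_simp
    | (k + 1) =>
      have h2 : v (k + 2) + v k = 2 * v (k + 1) * Real.cos θ := by
        have e1 : (((k:ℝ) + 2) + 1) * θ = ((k:ℝ) + 2) * θ + θ := by ring
        have e2 : ((k:ℝ) + 1) * θ = ((k:ℝ) + 2) * θ - θ := by ring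
        simp only [hv, Nat.cast_add, Nat.cast_ofNat, Nat.cast_one]
        rw [show ((k:ℝ) + 2 + 1) = (k:ℝ) + 2 + 1 from rfl]
        rw [e1, e2, Real.sin_add, Real.sin_sub]
        ring
      simp only [ha, hb, Nat.add_sub_cancel, if_neg (Nat.succ_ne_zero k)]
      have h0 : v (k + 1) ≠ 0 := ne_of_gt hvj
      rw [div_mul_eq_mul_div, div_mul_eq_mul_div, ← add_div, div_eq_iff (by positivity)]
      nlinarith [h2]
  calc ∑ j ∈ Finset.range m, s j * s (j + 1)
      ≤ ∑ j ∈ Finset.range m, (a j + v j / (2 * v (j + 1)) * s (j + 1) ^ 2) := step1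
    _ = ∑ j ∈ Finset.range m, a j + ∑ j ∈ Finset.range m, v j / (2 * v (j + 1)) * s (j + 1) ^ 2 :=
        Finset.sum_add_distrib
    _ = ∑ j ∈ Finset.range (m + 1), a j + ∑ j ∈ Finset.range (m + 1), b j := by
        rw [step2, step3]
    _ = ∑ j ∈ Finset.range (m + 1), (a j + b j) := Finset.sum_add_distrib.symm
    _ = ∑ j ∈ Finset.range (m + 1), Real.cos θ * s j ^ 2 := Finset.sum_congr rfl step4
    _ = Real.cos θ * ∑ j ∈ Finset.range (m + 1), s j ^ 2 := by rw [Finset.mul_sum]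

private lemma cosnn (m : ℕ) : 0 ≤ Real.cos (π / (m + 2)) := by
  apply Real.cos_nonneg_of_mem_Icc
  constructor
  · have : 0 < π / ((m:ℝ) + 2) := by positivity
    linarith [Real.pi_pos]
  · rw [div_le_div_iff₀ (by positivity) (by norm_num : (0:ℝ) < 2)]
    nlinarith [Real.pi_pos, (by exact_mod_cast Nat.zero_le m : (0:ℝ) ≤ (m:ℝ))]


private lemma realineq (m : ℕ) (a₀ a₁ : ℝ) (h₀ : 0 ≤ a₀) (h₁ : 0 ≤ a₁) (s : ℕ → ℝ)
    (hs : ∀ j, 0 ≤ s j) :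
    ∑ j ∈ Finset.range (m + 1),
        (a₀ * s j + a₁ * (if j = 0 then 0 else s (j - 1))) ^ 2 ≤
      (a₀ ^ 2 + a₁ ^ 2 + 2 * a₀ * a₁ * Real.cos (π / (m + 2))) *
        ∑ j ∈ Finset.range (m + 1), s j ^ 2 := by
  have hc0 : 0 ≤ Real.cos (π / (m + 2)) := by
    apply Real.cos_nonneg_of_mem_Icc
    constructor
    · have : 0 < π / ((m:ℝ) + 2) := by positivity
      linarith [Real.pi_pos]
    · rw [div_le_div_iff₀ (by positivity) (by norm_num : (0:ℝ) < 2)]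
      nlinarith [Real.pi_pos, (by exact_mod_cast Nat.zero_le m : (0:ℝ) ≤ (m:ℝ))]
  set S := ∑ j ∈ Finset.range (m + 1), s j ^ 2 with hS
  have hSnn : 0 ≤ S := Finset.sum_nonneg fun j _ => sq_nonneg _
  have hexp : ∑ j ∈ Finset.range (m + 1),
      (a₀ * s j + a₁ * (if j = 0 then 0 else s (j - 1))) ^ 2
      = a₀ ^ 2 * S + a₁ ^ 2 * ∑ j ∈ Finset.range m, s j ^ 2
        + 2 * a₀ * a₁ * ∑ j ∈ Finset.range m, s j * s (j + 1) := by
    have e : ∑ j ∈ Finset.range m, (a₀ * s (j + 1) + a₁ * s j) ^ 2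
        = a₀ ^ 2 * ∑ j ∈ Finset.range m, s (j + 1) ^ 2
          + a₁ ^ 2 * ∑ j ∈ Finset.range m, s j ^ 2
          + 2 * a₀ * a₁ * ∑ j ∈ Finset.range m, s j * s (j + 1) := by
      rw [Finset.mul_sum, Finset.mul_sum, Finset.mul_sum, ← Finset.sum_add_distrib,
        ← Finset.sum_add_distrib]
      exact Finset.sum_congr rfl fun j _ => by ring
    rw [Finset.sum_range_succ' _ m]
    simp only [Nat.succ_ne_zero, Nat.add_sub_cancel, reduceIte]
    rw [e, hS, Finset.sum_range_succ' (fun j => s j ^ 2) m]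
    ring
  rw [hexp]
  have hb1 : ∑ j ∈ Finset.range m, s j ^ 2 ≤ S := by
    apply Finset.sum_le_sum_of_subset_of_nonneg (Finset.range_subset_range.2 (Nat.le_succ m))
    intro j _ _; exact sq_nonneg _
  have hb2 : ∑ j ∈ Finset.range m, s j * s (j + 1) ≤ Real.cos (π / (m + 2)) * S :=
    key m s hs
  have h1 : a₁ ^ 2 * ∑ j ∈ Finset.range m, s j ^ 2 ≤ a₁ ^ 2 * S :=
    mul_le_mul_of_nonneg_left hb1 (sq_nonneg _)
  have h2 : 2 * a₀ * a₁ * ∑ j ∈ Finset.range m, s j * s (j + 1)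
      ≤ 2 * a₀ * a₁ * (Real.cos (π / (m + 2)) * S) :=
    mul_le_mul_of_nonneg_left hb2 (by positivity)
  nlinarith [h1, h2]

theorem stmt12 (a₀ a₁ : ℝ) (h₀ : 0 ≤ a₀) (h₁ : 0 ≤ a₁) (n : ℕ) (hn : 1 ≤ n) :
    toeplitzNorm (fun k : ℤ => if k = 0 then (a₀ : ℂ) else if k = 1 then (a₁ : ℂ) else 0) n ^ 2 ≤
      a₀ ^ 2 + a₁ ^ 2 + 2 * a₀ * a₁ * Real.cos (π / (n + 1)) := by
  obtain ⟨m, rfl⟩ : ∃ m, n = m + 1 := ⟨n - 1, (Nat.succ_pred_eq_of_pos hn).symm⟩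
  set a : ℤ → ℂ := fun k : ℤ => if k = 0 then (a₀ : ℂ) else if k = 1 then (a₁ : ℂ) else 0
    with haf
  have hcast : (π : ℝ) / (↑(m + 1) + 1) = π / (↑m + 2) := by push_cast; ring_nf
  rw [hcast]
  set C := a₀ ^ 2 + a₁ ^ 2 + 2 * a₀ * a₁ * Real.cos (π / (↑m + 2)) with hCdef
  have hC0 : 0 ≤ C := by
    have hc := cosnn m
    rw [hCdef]
    have : 0 ≤ 2 * a₀ * a₁ * Real.cos (π / (↑m + 2)) := by positivity
    nlinarith
  set T := Matrix.toEuclideanCLM (𝕜 := ℂ) (toeplitz a (m + 1)) with hT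
  have key_bound : ∀ x : EuclideanSpace ℂ (Fin (m + 1)), ‖T x‖ ≤ Real.sqrt C * ‖x‖ := by
    intro x
    set s : ℕ → ℝ := fun i => if h : i < m + 1 then ‖x ⟨i, h⟩‖ else 0 with hsdef
    have hsnn : ∀ j, 0 ≤ s j := by
      intro j
      simp only [hsdef]
      split
      · exact norm_nonneg _
      · exact le_refl 0
    -- entrywise formula
    have hTj : ∀ j : Fin (m + 1), T x j = (a₀ : ℂ) * x j +
        (a₁ : ℂ) * (if h : (j : ℕ) = 0 then 0 else x ⟨(j : ℕ) - 1, by omega⟩) := by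
      intro j
      show ∑ k : Fin (m + 1), a ((j : ℤ) - (k : ℤ)) * x k = _
      by_cases hj : (j : ℕ) = 0
      · rw [dif_pos hj]
        rw [Finset.sum_eq_single j]
        · have : ((j : ℤ) - (j : ℤ)) = 0 := by ring
          simp [haf, this]
        · intro k _ hk
          have hk' : (k : ℕ) ≠ (j : ℕ) := fun h => hk (Fin.ext h)
          have h1 : (j : ℤ) - (k : ℤ) ≠ 0 := by
            intro h; apply hk'; omega
          have h2 : (j : ℤ) - (k : ℤ) ≠ 1 := by
            intro h
            have : (j : ℕ) = (k : ℕ) + 1 := by omega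
            omega
          simp [haf, h1, h2]
        · simp
      · rw [dif_neg hj]
        set j' : Fin (m + 1) := ⟨(j : ℕ) - 1, by omega⟩ with hj'
        have hsplit : ∀ k : Fin (m + 1), a ((j : ℤ) - (k : ℤ)) * x k =
            (if k = j then (a₀ : ℂ) * x k else 0) + (if k = j' then (a₁ : ℂ) * x k else 0) := by
          intro k
          by_cases h1 : k = j
          · subst h1
            have hne : k ≠ j' := by
              intro h
              have : (k : ℕ) = (k : ℕ) - 1 := congrArg Fin.val h
              omega
            have : ((k : ℤ) - (k : ℤ)) = 0 := by ring
            simp [haf, this, hne]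
          · by_cases h2 : k = j'
            · subst h2
              have hval : ((j : ℤ) - ((j : ℕ) - 1 : ℕ)) = 1 := by
                have : 1 ≤ (j : ℕ) := by omega
                push_cast [this]
                ring
              have hne : ((j : ℤ) - ((j : ℕ) - 1 : ℕ)) ≠ 0 := by rw [hval]; norm_num
              simp only [if_neg h1, zero_add, if_pos rfl, hj']
              show a ((j : ℤ) - (((j : ℕ) - 1 : ℕ) : ℤ)) * _ = _
              rw [hval]
              simp [haf]
              exact fun h => (h1 h).elim
            · have hkj : (k : ℕ) ≠ (j : ℕ) := fun h => h1 (Fin.ext h)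
              have hkj' : (k : ℕ) ≠ (j : ℕ) - 1 := fun h => h2 (Fin.ext h)
              have hA : (j : ℤ) - (k : ℤ) ≠ 0 := by intro h; apply hkj; omega
              have hB : (j : ℤ) - (k : ℤ) ≠ 1 := by intro h; apply hkj'; omega
              simp [haf, hA, hB, h1, h2]
        rw [Finset.sum_congr rfl fun k _ => hsplit k, Finset.sum_add_distrib,
          Finset.sum_ite_eq', Finset.sum_ite_eq']
        simp
    -- entrywise norm bound
    have hentry : ∀ j : Fin (m + 1),
        ‖T x j‖ ≤ a₀ * s (j : ℕ) + a₁ * (if (j : ℕ) = 0 then 0 else s ((j : ℕ) - 1)) := by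
      intro j
      rw [hTj j]
      refine le_trans (norm_add_le _ _) ?_
      have e0 : ‖(a₀ : ℂ) * x j‖ = a₀ * s (j : ℕ) := by
        rw [norm_mul, Complex.norm_real, Real.norm_of_nonneg h₀, hsdef]
        simp [j.isLt]
      rw [e0]
      gcongr
      by_cases hj : (j : ℕ) = 0
      · simp [hj]
      · rw [dif_neg hj, if_neg hj, norm_mul, Complex.norm_real, Real.norm_of_nonneg h₁]
        apply mul_le_mul_of_nonneg_left _ h₁
        have hlt : (j : ℕ) - 1 < m + 1 := by omega
        simp only [hsdef]
        rw [dif_pos hlt]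
    -- sum of squares bound
    have hsum : ∑ j : Fin (m + 1), ‖T x j‖ ^ 2 ≤ C * ∑ j : Fin (m + 1), ‖x j‖ ^ 2 := by
      have h1 : ∑ j : Fin (m + 1), ‖T x j‖ ^ 2 ≤
          ∑ j : Fin (m + 1),
            (a₀ * s (j : ℕ) + a₁ * (if (j : ℕ) = 0 then 0 else s ((j : ℕ) - 1))) ^ 2 := by
        apply Finset.sum_le_sum
        intro j _
        have hnn : (0:ℝ) ≤ a₀ * s (j : ℕ) + a₁ * (if (j : ℕ) = 0 then 0 else s ((j : ℕ) - 1)) :=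
          le_trans (norm_nonneg _) (hentry j)
        exact pow_le_pow_left₀ (norm_nonneg _) (hentry j) 2
      have h2 : ∑ j : Fin (m + 1),
            (a₀ * s (j : ℕ) + a₁ * (if (j : ℕ) = 0 then 0 else s ((j : ℕ) - 1))) ^ 2
          = ∑ j ∈ Finset.range (m + 1),
            (a₀ * s j + a₁ * (if j = 0 then 0 else s (j - 1))) ^ 2 :=
        Fin.sum_univ_eq_sum_range (fun i => (a₀ * s i + a₁ * (if i = 0 then 0 else s (i - 1))) ^ 2)
          (m + 1)
      have h3 : ∑ j ∈ Finset.range (m + 1), s j ^ 2 = ∑ j : Fin (m + 1), ‖x j‖ ^ 2 := by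
        rw [← Fin.sum_univ_eq_sum_range (fun i => s i ^ 2) (m + 1)]
        apply Finset.sum_congr rfl
        intro j _
        rw [hsdef]
        simp [j.isLt]
      calc ∑ j : Fin (m + 1), ‖T x j‖ ^ 2
          ≤ ∑ j ∈ Finset.range (m + 1),
              (a₀ * s j + a₁ * (if j = 0 then 0 else s (j - 1))) ^ 2 := h1.trans_eq h2
        _ ≤ C * ∑ j ∈ Finset.range (m + 1), s j ^ 2 := realineq m a₀ a₁ h₀ h₁ s hsnn
        _ = C * ∑ j : Fin (m + 1), ‖x j‖ ^ 2 := by rw [h3]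
    rw [EuclideanSpace.norm_eq, EuclideanSpace.norm_eq, ← Real.sqrt_mul hC0]
    exact Real.sqrt_le_sqrt hsum
  have hop : ‖T‖ ≤ Real.sqrt C := T.opNorm_le_bound (Real.sqrt_nonneg C) key_bound
  calc toeplitzNorm a (m + 1) ^ 2 = ‖T‖ ^ 2 := rfl
    _ ≤ Real.sqrt C ^ 2 := pow_le_pow_left₀ (norm_nonneg _) hop 2
    _ = C := Real.sq_sqrt hC0
end

section
/- Let a₀, a₁ ≥ 0 be real numbers with a₀ + a₁ > 0, and let n ≥ 3. Let T_n be the n×n lower bidiagonal Toeplitz matrix with diagonal entries a₀ and first subdiagonal entries a₁. Then ‖T_n‖ ≤ (a₀ + a₁) − 8·(2 − √2)·a₀·a₁ / ((a₀ + a₁)·(n+1)²). In particular, for the symbol a(z) = a₀ + a₁ z, whose sup norm over the unit circle equals a₀ + a₁, the gap ‖a‖∞ − ‖T_n(a)‖ is bounded below by 8(2−√2) a₀ a₁ / ((a₀+a₁)(n+1)²), so the O(1/n²) rate of convergence of finite Toeplitz sections cannot be improved in general. -/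
open scoped Real
open Finset

lemma amgm_aux (A B u v : ℝ) (hA : 0 < A) (hB : 0 < B) :
    u * v ≤ u ^ 2 * (B / A) / 2 + v ^ 2 * (A / B) / 2 := by
  have e : u ^ 2 * (B / A) / 2 + v ^ 2 * (A / B) / 2
      = (u ^ 2 * B * B + v ^ 2 * A * A) / (2 * (A * B)) := by
    field_simp
  rw [e, le_div_iff₀ (by positivity)]
  nlinarith [sq_nonneg (u * B - v * A)]

lemma combine_aux (A B C c u : ℝ) (hA : A ≠ 0) (h : B + C = 2 * c * A) :
    u ^ 2 * (B / A) / 2 + u ^ 2 * (C / A) / 2 = c * u ^ 2 := by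
  have e : u ^ 2 * (B / A) / 2 + u ^ 2 * (C / A) / 2 = u ^ 2 * ((B + C) / A) / 2 := by
    ring
  rw [e, h]
  field_simp

lemma key_tridiag (m : ℕ) (Y : ℕ → ℝ) :
    ∑ j ∈ Finset.range m, Y j * Y (j + 1)
      ≤ Real.cos (π / (m + 2)) * ∑ j ∈ Finset.range (m + 1), Y j ^ 2 := by
  set t : ℝ := π / (m + 2) with ht_def
  have hm2 : (0:ℝ) < (m:ℝ) + 2 := by positivity
  have ht : 0 < t := by positivity
  have hs : ∀ j : ℕ, 1 ≤ j → j ≤ m + 1 → 0 < Real.sin (j * t) := by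
    intro j h1 h2
    apply Real.sin_pos_of_pos_of_lt_pi
    · have : (0:ℝ) < (j:ℝ) := by exact_mod_cast h1
      positivity
    · calc (j:ℝ) * (π / ((m:ℝ)+2)) < ((m:ℝ)+2) * (π / ((m:ℝ)+2)) := by
            apply mul_lt_mul_of_pos_right _ (by positivity)
            have : (j:ℝ) ≤ (m:ℝ) + 1 := by exact_mod_cast h2
            linarith
        _ = π := by field_simp
  have hrec : ∀ j : ℕ, Real.sin (((j:ℝ) + 2) * t) + Real.sin ((j:ℝ) * t)
      = 2 * Real.cos t * Real.sin (((j:ℝ) + 1) * t) := by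
    intro j
    have e1 : ((j:ℝ) + 2) * t = ((j:ℝ) + 1) * t + t := by ring
    have e2 : (j:ℝ) * t = ((j:ℝ) + 1) * t - t := by ring
    rw [e1, e2, Real.sin_add, Real.sin_sub]
    ring
  set f : ℕ → ℝ := fun j => Y j ^ 2 * (Real.sin (((j:ℝ) + 2) * t) / Real.sin (((j:ℝ) + 1) * t)) / 2
    with hf_def
  set g : ℕ → ℝ := fun j => Y j ^ 2 * (Real.sin ((j:ℝ) * t) / Real.sin (((j:ℝ) + 1) * t)) / 2
    with hg_def
  have step1 : ∀ j ∈ Finset.range m, Y j * Y (j + 1) ≤ f j + g (j + 1) := by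
    intro j hj
    rw [Finset.mem_range] at hj
    have hA : 0 < Real.sin (((j:ℝ) + 1) * t) := by
      have := hs (j + 1) (by omega) (by omega); push_cast at this; exact this
    have hB : 0 < Real.sin (((j:ℝ) + 2) * t) := by
      have := hs (j + 2) (by omega) (by omega); push_cast at this; exact this
    have hg1 : g (j + 1)
        = Y (j + 1) ^ 2 * (Real.sin (((j:ℝ) + 1) * t) / Real.sin (((j:ℝ) + 2) * t)) / 2 := by
      rw [hg_def]
      push_cast
      ring_nf
    rw [hg1, hf_def]
    exact amgm_aux _ _ _ _ hA hB
  have fm : f m = 0 := by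
    have : ((m:ℝ) + 2) * t = π := by rw [ht_def]; field_simp
    rw [hf_def]
    simp only [this, Real.sin_pi, zero_div, mul_zero, zero_div]
  have g0 : g 0 = 0 := by
    rw [hg_def]
    norm_num
  have combine : ∀ j ∈ Finset.range (m + 1), f j + g j = Real.cos t * Y j ^ 2 := by
    intro j hj
    rw [Finset.mem_range] at hj
    have hA : Real.sin (((j:ℝ) + 1) * t) ≠ 0 := by
      have := hs (j + 1) (by omega) (by omega); push_cast at this; exact this.ne'
    rw [hf_def, hg_def]
    exact combine_aux _ _ _ _ _ hA (hrec j)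
  calc ∑ j ∈ Finset.range m, Y j * Y (j + 1)
      ≤ ∑ j ∈ Finset.range m, (f j + g (j + 1)) := Finset.sum_le_sum step1
    _ = ∑ j ∈ Finset.range m, f j + ∑ j ∈ Finset.range m, g (j + 1) :=
        Finset.sum_add_distrib
    _ = ∑ j ∈ Finset.range (m + 1), f j + ∑ j ∈ Finset.range (m + 1), g j := by
        rw [Finset.sum_range_succ, fm, Finset.sum_range_succ' _ m, g0]
        ring
    _ = ∑ j ∈ Finset.range (m + 1), (f j + g j) := Finset.sum_add_distrib.symm
    _ = ∑ j ∈ Finset.range (m + 1), Real.cos t * Y j ^ 2 := Finset.sum_congr rfl combine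
    _ = Real.cos t * ∑ j ∈ Finset.range (m + 1), Y j ^ 2 := by rw [Finset.mul_sum]

lemma trig_bound (n : ℕ) (hn : 3 ≤ n) :
    8 * (2 - Real.sqrt 2) / ((n:ℝ) + 1) ^ 2 ≤ 1 - Real.cos (π / ((n:ℝ) + 1)) := by
  set N : ℝ := (n:ℝ) + 1 with hN_def
  have hN4 : (4:ℝ) ≤ N := by
    have : (3:ℝ) ≤ (n:ℝ) := by exact_mod_cast hn
    simp [hN_def]; linarith
  have hN0 : (0:ℝ) < N := by linarith
  have hsqrt2 : Real.sqrt 2 ≤ 2 := by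
    nlinarith [Real.sq_sqrt (show (0:ℝ) ≤ 2 by norm_num), Real.sqrt_nonneg 2]
  have hsqrt2' : (0:ℝ) ≤ 2 - Real.sqrt 2 := by linarith
  have hθ1 : 4 / N ≤ 1 := by
    rw [div_le_one hN0]; linarith
  have hθ0 : (0:ℝ) ≤ 4 / N := by positivity
  have hx8 : π / 8 ∈ Set.Icc (0:ℝ) π := Set.mem_Icc.2 ⟨by positivity, by linarith [Real.pi_pos]⟩
  have hy0 : (0:ℝ) ∈ Set.Icc (0:ℝ) π := Set.mem_Icc.2 ⟨le_refl 0, Real.pi_pos.le⟩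
  have hconc := strictConcaveOn_sin_Icc.concaveOn.2 hx8 hy0 hθ0 (sub_nonneg.2 hθ1) (by ring)
  rw [smul_eq_mul, smul_eq_mul, smul_eq_mul, smul_eq_mul, Real.sin_zero, mul_zero, add_zero,
    add_zero] at hconc
  have ht_eq : 4 / N * (π / 8) = π / N / 2 := by field_simp; ring
  rw [ht_eq, Real.sin_pi_div_eight] at hconc
  have hsin_lb : 2 * Real.sqrt (2 - Real.sqrt 2) / N ≤ Real.sin (π / N / 2) := by
    calc 2 * Real.sqrt (2 - Real.sqrt 2) / N = 4 / N * (Real.sqrt (2 - Real.sqrt 2) / 2) := by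
          field_simp; ring
      _ ≤ _ := hconc
  have hcos : 1 - Real.cos (π / N) = 2 * Real.sin (π / N / 2) ^ 2 := by
    have hsq2 := Real.sin_sq_eq_half_sub (π / N / 2)
    rw [show 2 * (π / N / 2) = π / N by ring] at hsq2
    linarith
  rw [hcos]
  have hlb0 : (0:ℝ) ≤ 2 * Real.sqrt (2 - Real.sqrt 2) / N := by positivity
  have hsq : (2 * Real.sqrt (2 - Real.sqrt 2) / N) ^ 2 ≤ Real.sin (π / N / 2) ^ 2 := by
    apply pow_le_pow_left₀ hlb0 hsin_lb
  have hval : (2 * Real.sqrt (2 - Real.sqrt 2) / N) ^ 2 = 4 * (2 - Real.sqrt 2) / N ^ 2 := by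
    rw [div_pow, mul_pow, Real.sq_sqrt hsqrt2']
    ring
  rw [hval] at hsq
  rw [show 8 * (2 - Real.sqrt 2) / N ^ 2 = 2 * (4 * (2 - Real.sqrt 2) / N ^ 2) by ring]
  linarith

lemma entry_formula (a₀ a₁ : ℝ) (n : ℕ) (x : Fin n → ℂ)
    (X : ℕ → ℂ) (hX0 : X 0 = 0) (hXs : ∀ k (h : k < n), X (k + 1) = x ⟨k, h⟩) (j : Fin n) :
    ∑ k : Fin n,
        (if ((j : ℤ) - (k : ℤ)) = 0 then (a₀ : ℂ)
          else if ((j : ℤ) - (k : ℤ)) = 1 then (a₁ : ℂ) else 0) * x k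
      = a₀ * X ((j : ℕ) + 1) + a₁ * X (j : ℕ) := by
  have hsplit : ∀ k : Fin n,
      (if ((j : ℤ) - (k : ℤ)) = 0 then (a₀ : ℂ)
        else if ((j : ℤ) - (k : ℤ)) = 1 then (a₁ : ℂ) else 0) * x k
      = (if k = j then (a₀ : ℂ) * x k else 0)
        + (if (k : ℕ) + 1 = (j : ℕ) then (a₁ : ℂ) * x k else 0) := by
    intro k
    by_cases h1 : ((j : ℤ) - (k : ℤ)) = 0
    · have hkj : k = j := Fin.ext (by omega)
      have hk1 : ¬((k : ℕ) + 1 = (j : ℕ)) := by omega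
      rw [if_pos h1, if_pos hkj, if_neg hk1, add_zero]
    · by_cases h2 : ((j : ℤ) - (k : ℤ)) = 1
      · have hk1 : (k : ℕ) + 1 = (j : ℕ) := by omega
        have hkj : ¬(k = j) := by
          intro h; rw [h] at hk1; omega
        rw [if_neg h1, if_pos h2, if_neg hkj, if_pos hk1, zero_add]
      · have hkj : ¬(k = j) := by
          intro h; rw [h] at h1; omega
        have hk1 : ¬((k : ℕ) + 1 = (j : ℕ)) := by omega
        rw [if_neg h1, if_neg h2, if_neg hkj, if_neg hk1, zero_mul, add_zero]
  rw [Finset.sum_congr rfl (fun k _ => hsplit k), Finset.sum_add_distrib]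
  have sum1 : ∑ k : Fin n, (if k = j then (a₀ : ℂ) * x k else 0) = a₀ * X ((j : ℕ) + 1) := by
    rw [Finset.sum_ite_eq' Finset.univ j (fun k => (a₀ : ℂ) * x k), if_pos (Finset.mem_univ j)]
    rw [hXs (j : ℕ) j.isLt]
  have sum2 : ∑ k : Fin n, (if (k : ℕ) + 1 = (j : ℕ) then (a₁ : ℂ) * x k else 0)
      = a₁ * X (j : ℕ) := by
    rcases hj : (j : ℕ) with _ | m
    · rw [Finset.sum_eq_zero, hX0, mul_zero]
      intro k _
      rw [if_neg (by omega)]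
    · have hm : m < n := by have := j.isLt; omega
      have econd : ∀ k : Fin n, ((k : ℕ) + 1 = m + 1) ↔ (k = ⟨m, hm⟩) := fun k =>
        ⟨fun h => Fin.ext (Nat.add_right_cancel h), fun h => by rw [h]⟩
      calc ∑ k : Fin n, (if (k : ℕ) + 1 = m + 1 then (a₁ : ℂ) * x k else 0)
          = ∑ k : Fin n, (if k = (⟨m, hm⟩ : Fin n) then (a₁ : ℂ) * x k else 0) := by
            apply Finset.sum_congr rfl
            intro k _
            by_cases hk : (k : ℕ) + 1 = m + 1
            · rw [if_pos hk, if_pos ((econd k).1 hk)]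
            · rw [if_neg hk, if_neg (fun h => hk ((econd k).2 h))]
        _ = (a₁ : ℂ) * x ⟨m, hm⟩ := by
            rw [Finset.sum_ite_eq' Finset.univ _ (fun k => (a₁ : ℂ) * x k),
              if_pos (Finset.mem_univ _)]
        _ = a₁ * X (m + 1) := by rw [hXs m hm]
  rw [sum1, sum2]

set_option maxHeartbeats 1000000 in
theorem stmt13 (a₀ a₁ : ℝ) (h₀ : 0 ≤ a₀) (h₁ : 0 ≤ a₁) (hsum : 0 < a₀ + a₁)
    (n : ℕ) (hn : 3 ≤ n) :
    toeplitzNorm (fun k : ℤ => if k = 0 then (a₀ : ℂ) else if k = 1 then (a₁ : ℂ) else 0) n ≤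
      (a₀ + a₁) - 8 * (2 - Real.sqrt 2) * a₀ * a₁ / ((a₀ + a₁) * (n + 1) ^ 2) := by
  set a : ℤ → ℂ := fun k : ℤ => if k = 0 then (a₀ : ℂ) else if k = 1 then (a₁ : ℂ) else 0
    with ha_def
  obtain ⟨m, rfl⟩ : ∃ m, n = m + 1 := ⟨n - 1, by omega⟩
  set c : ℝ := Real.cos (π / ((m:ℝ) + 2)) with hc_def
  have hc1 : c ≤ 1 := Real.cos_le_one _
  have hcm1 : -1 ≤ c := Real.neg_one_le_cos _
  set lam : ℝ := a₀ ^ 2 + a₁ ^ 2 + 2 * a₀ * a₁ * c with hlam_def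
  have ha01 : 0 ≤ a₀ * a₁ := mul_nonneg h₀ h₁
  have hlam0 : 0 ≤ lam := by nlinarith [sq_nonneg (a₀ - a₁)]
  have key_norm : toeplitzNorm a (m + 1) ≤ Real.sqrt lam := by
    unfold toeplitzNorm
    apply ContinuousLinearMap.opNorm_le_bound _ (Real.sqrt_nonneg _)
    intro x
    set v : EuclideanSpace ℂ (Fin (m + 1)) :=
      (Matrix.toEuclideanCLM (𝕜 := ℂ) (toeplitz a (m + 1))) x with hv_def
    set X : ℕ → ℂ :=
      fun k => Nat.casesOn k 0 (fun k' => if h : k' < m + 1 then x ⟨k', h⟩ else 0) with hX_def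
    have hX0 : X 0 = 0 := rfl
    have hXs : ∀ k (h : k < m + 1), X (k + 1) = x ⟨k, h⟩ := by
      intro k h
      show (if h' : k < m + 1 then x ⟨k, h'⟩ else 0) = x ⟨k, h⟩
      rw [dif_pos h]
    set Y : ℕ → ℝ := fun k => ‖X k‖ with hY_def
    have hY0 : Y 0 = 0 := by rw [hY_def]; simp [hX0]
    have hYnn : ∀ k, 0 ≤ Y k := fun k => norm_nonneg _
    have hYx : ∀ j : Fin (m + 1), Y ((j : ℕ) + 1) = ‖x j‖ := by
      intro j
      show ‖X ((j : ℕ) + 1)‖ = ‖x j‖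
      rw [hXs (j : ℕ) j.isLt]
    have hvj : ∀ j : Fin (m + 1), v j = a₀ * X ((j : ℕ) + 1) + a₁ * X (j : ℕ) := by
      intro j
      have hrfl : v j = ∑ k, toeplitz a (m + 1) j k * x k := rfl
      have hent : ∀ k : Fin (m + 1), toeplitz a (m + 1) j k
          = (if ((j : ℤ) - (k : ℤ)) = 0 then (a₀ : ℂ)
              else if ((j : ℤ) - (k : ℤ)) = 1 then (a₁ : ℂ) else 0) := fun k => rfl
      rw [hrfl, Finset.sum_congr rfl (fun k _ => by rw [hent k])]
      exact entry_formula a₀ a₁ (m + 1) (fun i => x i) X hX0 hXs j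
    have hbd : ∀ j : Fin (m + 1),
        ‖v j‖ ≤ a₀ * Y ((j : ℕ) + 1) + a₁ * Y (j : ℕ) := by
      intro j
      rw [hvj j]
      refine le_trans (norm_add_le _ _) ?_
      rw [norm_mul, norm_mul, Complex.norm_real, Complex.norm_real,
        Real.norm_eq_abs, Real.norm_eq_abs, abs_of_nonneg h₀, abs_of_nonneg h₁]
    set S : ℝ := ∑ j ∈ Finset.range (m + 1), Y (j + 1) ^ 2 with hS_def
    have hxnorm : ‖x‖ ^ 2 = S := by
      rw [PiLp.norm_sq_eq_of_L2, hS_def,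
        ← Fin.sum_univ_eq_sum_range (fun j => Y (j + 1) ^ 2) (m + 1)]
      exact Finset.sum_congr rfl fun j _ => by rw [hYx j]
    have hvnorm : ‖v‖ ^ 2
        ≤ ∑ j ∈ Finset.range (m + 1), (a₀ * Y (j + 1) + a₁ * Y j) ^ 2 := by
      rw [PiLp.norm_sq_eq_of_L2,
        ← Fin.sum_univ_eq_sum_range (fun j => (a₀ * Y (j + 1) + a₁ * Y j) ^ 2) (m + 1)]
      apply Finset.sum_le_sum
      intro j _
      exact pow_le_pow_left₀ (norm_nonneg _) (hbd j) 2
    have hexpand : ∑ j ∈ Finset.range (m + 1), (a₀ * Y (j + 1) + a₁ * Y j) ^ 2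
        = a₀ ^ 2 * S + a₁ ^ 2 * (∑ j ∈ Finset.range (m + 1), Y j ^ 2)
          + 2 * a₀ * a₁ * (∑ j ∈ Finset.range (m + 1), Y j * Y (j + 1)) := by
      rw [hS_def, Finset.mul_sum, Finset.mul_sum, Finset.mul_sum,
        ← Finset.sum_add_distrib, ← Finset.sum_add_distrib]
      exact Finset.sum_congr rfl fun j _ => by ring
    have hSY : ∑ j ∈ Finset.range (m + 1), Y j ^ 2 ≤ S := by
      rw [Finset.sum_range_succ' (fun j => Y j ^ 2) m, hY0]
      have hsub : ∑ j ∈ Finset.range m, Y (j + 1) ^ 2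
          ≤ ∑ j ∈ Finset.range (m + 1), Y (j + 1) ^ 2 :=
        Finset.sum_le_sum_of_subset_of_nonneg
          (Finset.range_subset_range.2 (Nat.le_succ m)) (fun i _ _ => sq_nonneg _)
      rw [hS_def]
      simpa using hsub
    have hcross : ∑ j ∈ Finset.range (m + 1), Y j * Y (j + 1) ≤ c * S := by
      rw [Finset.sum_range_succ' (fun j => Y j * Y (j + 1)) m, hY0, zero_mul, add_zero]
      exact key_tridiag m (fun j => Y (j + 1))
    have hfin : ‖v‖ ^ 2 ≤ lam * ‖x‖ ^ 2 := by
      have h1 : a₁ ^ 2 * (∑ j ∈ Finset.range (m + 1), Y j ^ 2) ≤ a₁ ^ 2 * S :=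
        mul_le_mul_of_nonneg_left hSY (sq_nonneg a₁)
      have h2 : 2 * a₀ * a₁ * (∑ j ∈ Finset.range (m + 1), Y j * Y (j + 1))
          ≤ 2 * a₀ * a₁ * (c * S) :=
        mul_le_mul_of_nonneg_left hcross (by positivity)
      have hS0 : 0 ≤ S := by
        rw [hS_def]; exact Finset.sum_nonneg fun i _ => sq_nonneg _
      have hlamS : lam * S = a₀ ^ 2 * S + a₁ ^ 2 * S + 2 * a₀ * a₁ * (c * S) := by
        rw [hlam_def]; ring
      rw [hxnorm]
      calc ‖v‖ ^ 2
          ≤ ∑ j ∈ Finset.range (m + 1), (a₀ * Y (j + 1) + a₁ * Y j) ^ 2 := hvnorm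
        _ = a₀ ^ 2 * S + a₁ ^ 2 * (∑ j ∈ Finset.range (m + 1), Y j ^ 2)
              + 2 * a₀ * a₁ * (∑ j ∈ Finset.range (m + 1), Y j * Y (j + 1)) := hexpand
        _ ≤ lam * S := by rw [hlamS]; linarith
    calc ‖v‖
        = Real.sqrt (‖v‖ ^ 2) := (Real.sqrt_sq (norm_nonneg _)).symm
      _ ≤ Real.sqrt (lam * ‖x‖ ^ 2) := Real.sqrt_le_sqrt hfin
      _ = Real.sqrt lam * ‖x‖ := by
          rw [Real.sqrt_mul hlam0, Real.sqrt_sq (norm_nonneg _)]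
  -- algebraic endgame
  set d : ℝ := a₀ * a₁ * (1 - c) / (a₀ + a₁) with hd_def
  have hd_eq : d * (a₀ + a₁) = a₀ * a₁ * (1 - c) := by
    rw [hd_def]; field_simp
  have hd0 : 0 ≤ d := by
    apply div_nonneg _ hsum.le
    nlinarith
  have hsub0 : 0 ≤ (a₀ + a₁) - d := by
    nlinarith [hd_eq, sq_nonneg (a₀ - a₁), sq_nonneg (a₀ + a₁)]
  have hsqrt_le : Real.sqrt lam ≤ (a₀ + a₁) - d := by
    have hle : lam ≤ ((a₀ + a₁) - d) ^ 2 := by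
      nlinarith [hd_eq, sq_nonneg d]
    calc Real.sqrt lam ≤ Real.sqrt (((a₀ + a₁) - d) ^ 2) := Real.sqrt_le_sqrt hle
      _ = (a₀ + a₁) - d := Real.sqrt_sq hsub0
  have trig := trig_bound (m + 1) hn
  have e2 : ((m + 1 : ℕ) : ℝ) + 1 = (m : ℝ) + 2 := by push_cast; ring
  rw [e2, ← hc_def] at trig
  have trig' : 8 * (2 - Real.sqrt 2) ≤ (1 - c) * ((m : ℝ) + 2) ^ 2 := by
    rw [div_le_iff₀ (by positivity)] at trig
    linarith
  have hD_le_d : 8 * (2 - Real.sqrt 2) * a₀ * a₁ / ((a₀ + a₁) * (((m + 1 : ℕ) : ℝ) + 1) ^ 2)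
      ≤ d := by
    rw [hd_def, e2, div_le_div_iff₀ (by positivity) (by positivity)]
    nlinarith [mul_le_mul_of_nonneg_left trig' (mul_nonneg ha01 hsum.le)]
  calc toeplitzNorm a (m + 1) ≤ Real.sqrt lam := key_norm
    _ ≤ (a₀ + a₁) - d := hsqrt_le
    _ ≤ (a₀ + a₁) - 8 * (2 - Real.sqrt 2) * a₀ * a₁
          / ((a₀ + a₁) * (((m + 1 : ℕ) : ℝ) + 1) ^ 2) := by linarith
end

section
/- Let ρ ∈ (0,1), C > 0 and D > 0, and let G(z) := C/(z − ρ) + D. Define h : ℝ → ℝ by h(θ) := |G(e^{iθ})|². Then h is twice differentiable at θ = 0 and h''(0) = −(2·D·C·(1−ρ²) + 2·C²·ρ)/(1−ρ)⁴. Consequently, the smoothness constant of Lemma on quadratic decay of the squared symbol, L = (DC(1−ρ²)+C²ρ)/(1−ρ)⁴, cannot be improved in general. -/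
open scoped Real

theorem stmt16 (ρ C D : ℝ) (hρ : ρ ∈ Set.Ioo (0 : ℝ) 1) (hC : 0 < C) (hD : 0 < D)
    (h : ℝ → ℝ)
    (hdef : ∀ θ : ℝ,
      h θ = ‖(C : ℂ) / (Complex.exp (Complex.I * θ) - (ρ : ℂ)) + (D : ℂ)‖ ^ 2) :
    DifferentiableAt ℝ h 0 ∧ DifferentiableAt ℝ (deriv h) 0 ∧
      deriv (deriv h) 0 = -(2 * D * C * (1 - ρ ^ 2) + 2 * C ^ 2 * ρ) / (1 - ρ) ^ 4 := by
  obtain ⟨hρ0, hρ1⟩ := hρ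
  have hhf : h = fun θ => (((C - D*ρ)^2 + D^2) + 2*D*(C - D*ρ) * Real.cos θ) /
      (1 - 2*ρ*Real.cos θ + ρ^2) := by
    funext θ
    have hz : Complex.exp (Complex.I * θ) = Complex.exp ((θ:ℂ) * Complex.I) := by ring_nf
    have hzne : Complex.exp ((θ:ℂ) * Complex.I) - (ρ:ℂ) ≠ 0 := by
      intro hc
      have h1 : ‖Complex.exp ((θ:ℂ) * Complex.I)‖ = 1 :=
        Complex.norm_exp_ofReal_mul_I θ
      have : Complex.exp ((θ:ℂ) * Complex.I) = (ρ:ℂ) := by linear_combination hc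
      rw [this] at h1
      simp [Complex.norm_real, abs_of_pos hρ0] at h1
      linarith
    rw [hdef θ, hz]
    have key : (C : ℂ) / (Complex.exp ((θ:ℂ) * Complex.I) - (ρ : ℂ)) + (D : ℂ)
        = ((C:ℂ) + D * (Complex.exp ((θ:ℂ) * Complex.I) - ρ)) /
          (Complex.exp ((θ:ℂ) * Complex.I) - ρ) := by
      field_simp
    rw [key, norm_div, div_pow, Complex.sq_norm, Complex.sq_norm]
    have hre : (Complex.exp ((θ:ℂ) * Complex.I)).re = Real.cos θ := Complex.exp_ofReal_mul_I_re θ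
    have him : (Complex.exp ((θ:ℂ) * Complex.I)).im = Real.sin θ := Complex.exp_ofReal_mul_I_im θ
    have hpyth := Real.sin_sq_add_cos_sq θ
    have hd2 : (0:ℝ) < 1 - 2*ρ*Real.cos θ + ρ^2 := by
      nlinarith [Real.cos_le_one θ]
    simp only [Complex.normSq_apply, Complex.add_re, Complex.add_im, Complex.sub_re,
      Complex.sub_im, Complex.mul_re, Complex.mul_im, Complex.ofReal_re, Complex.ofReal_im,
      hre, him]
    rw [div_eq_div_iff (by nlinarith [hpyth]) (ne_of_gt hd2)]
    linear_combination (D^2*(1 - 2*ρ*Real.cos θ + ρ^2)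
      - (((C - D*ρ)^2 + D^2) + 2*D*(C - D*ρ) * Real.cos θ)) * hpyth
  set A := (C - D*ρ)^2 + D^2 with hA
  set B := 2*D*(C - D*ρ) with hB
  have hd : ∀ θ : ℝ, (0:ℝ) < 1 - 2*ρ*Real.cos θ + ρ^2 := by
    intro θ; nlinarith [Real.cos_le_one θ]
  set f' : ℝ → ℝ := fun θ =>
    ((B * -Real.sin θ) * (1 - 2*ρ*Real.cos θ + ρ^2)
      - (A + B * Real.cos θ) * (2*ρ*Real.sin θ)) / (1 - 2*ρ*Real.cos θ + ρ^2)^2 with hf'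
  have hder : ∀ θ : ℝ, HasDerivAt h (f' θ) θ := by
    intro θ
    have hn : HasDerivAt (fun θ : ℝ => A + B * Real.cos θ) (B * -Real.sin θ) θ := by
      simpa using ((Real.hasDerivAt_cos θ).const_mul B).const_add A
    have hg : HasDerivAt (fun θ : ℝ => 1 - 2*ρ*Real.cos θ + ρ^2) (2*ρ*Real.sin θ) θ := by
      have := ((Real.hasDerivAt_cos θ).const_mul (2*ρ)).const_sub 1
      simpa [mul_comm, mul_assoc, mul_left_comm] using this.add_const (ρ^2)
    rw [hhf]
    exact hn.div hg (ne_of_gt (hd θ))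
  have hderiv_h : deriv h = f' := funext fun θ => (hder θ).deriv
  have hg0 : HasDerivAt (fun θ : ℝ => 1 - 2*ρ*Real.cos θ + ρ^2) (2*ρ*Real.sin 0) 0 := by
    have := ((Real.hasDerivAt_cos 0).const_mul (2*ρ)).const_sub 1
    simpa [mul_comm, mul_assoc, mul_left_comm] using this.add_const (ρ^2)
  have h1 : HasDerivAt (fun θ : ℝ => B * -Real.sin θ) (B * -Real.cos 0) 0 := by
    simpa using ((Real.hasDerivAt_sin 0).neg.const_mul B)
  have h2 : HasDerivAt (fun θ : ℝ => A + B * Real.cos θ) (B * -Real.sin 0) 0 := by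
    simpa using ((Real.hasDerivAt_cos 0).const_mul B).const_add A
  have h3 : HasDerivAt (fun θ : ℝ => 2*ρ*Real.sin θ) (2*ρ*Real.cos 0) 0 := by
    simpa [mul_assoc] using (Real.hasDerivAt_sin 0).const_mul (2*ρ)
  have hN : HasDerivAt
      (fun θ : ℝ => (B * -Real.sin θ) * (1 - 2*ρ*Real.cos θ + ρ^2)
        - (A + B * Real.cos θ) * (2*ρ*Real.sin θ))
      ((B * -Real.cos 0) * (1 - 2*ρ*Real.cos 0 + ρ^2) + (B * -Real.sin 0) * (2*ρ*Real.sin 0)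
        - ((B * -Real.sin 0) * (2*ρ*Real.sin 0) + (A + B * Real.cos 0) * (2*ρ*Real.cos 0))) 0 :=
    (h1.mul hg0).sub (h2.mul h3)
  have hD2 : HasDerivAt (fun θ : ℝ => (1 - 2*ρ*Real.cos θ + ρ^2)^2)
      ((2:ℕ) * (1 - 2*ρ*Real.cos 0 + ρ^2)^1 * (2*ρ*Real.sin 0)) 0 := hg0.pow 2
  have hQ := hN.div hD2 (pow_ne_zero 2 (ne_of_gt (hd 0)))
  refine ⟨(hder 0).differentiableAt, ?_, ?_⟩
  · rw [hderiv_h]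
    exact hQ.differentiableAt
  · rw [hderiv_h, show deriv f' 0 = _ from hQ.deriv]
    norm_num
    have h1ρ : (0:ℝ) < 1 - ρ := by linarith
    have hq : (0:ℝ) < 1 - 2*ρ + ρ^2 := by nlinarith
    rw [hA, hB, div_eq_div_iff (ne_of_gt (pow_pos (pow_pos hq 2) 2)) (ne_of_gt (pow_pos h1ρ 4))]
    ring
end
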